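/- arXiv:1808.09067 — 3 statements merged into one kernel-verified Lean document; each statement's English description precedes it below -/
import Mathlib

section
/- Let f ∈ k[[x,y]] with ν_A(f) ≥ δ₀ for some δ₀ > 0 (so f lies in the ideal (x_1,…,x_r)), set z′ = z + f, and define the z′-levels of ω by η′_s = Σ_{t≥s} C(t,s)·(−f)^{t−s}·η_t − Σ_{t≥s+1} C(t−1,s)·(−f)^{t−s−1}·h_t·df and h′_s = Σ_{t≥s} C(t−1,s−1)·(−f)^{t−s}·h_t (binomial coefficients C(·,·); the series converge in the maximal-adic topology), so that ω = Σ_s z′^s·(η′_s + h′_s·dz′/z′). Assume ω ≠ 0. Then: (1) for every δ with 0 < δ ≤ δ₀, min_s(sδ + min{ν_A(η_s), ν_A(h_s)}) = min_s(sδ + min{ν_A(η′_s), ν_A(h′_s)}); consequently the Newton polygons N and N′ of the two level families satisfy χ_{δ₀}(N) = χ_{δ₀}(N′) =: χ and λ_N(s) = λ_{N′}(s) for all s ≥ χ; (2) for every s ≥ χ, letting I_s be the unique multi-index with ν(x^{I_s}) = λ_N(s), the λ_N(s)-reduced vectors of the level s coincide for the two level families, i.e. the vectors in k^{r+1} of constant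 terms (at y = 0) of the coefficients of x^{I_s} in (f_{s1},…,f_{sr},h_s) and in (f′_{s1},…,f′_{sr},h′_s) are equal. -/
noncomputable section
open MvPowerSeries Classical

section Core

variable {k : Type} [Field k] {σ : Type}

/-- Weighted value of an exponent. -/
def wtG (W : σ → ℝ) (e : σ →₀ ℕ) : ℝ := e.sum fun i m => (m : ℝ) * W i

/-- Explicit value of a formal power series. -/
def nuG (W : σ → ℝ) (f : MvPowerSeries σ k) : EReal :=
  sInf {v : EReal | ∃ e : σ →₀ ℕ, MvPowerSeries.coeff e f ≠ 0 ∧ v = ((wtG W e : ℝ) : EReal)}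

/-- Derivative operators: `x·∂/∂x` for logarithmic variables, `∂/∂y` for plain ones. -/
def DopG (isLog : σ → Bool) (b : σ) (f : MvPowerSeries σ k) : MvPowerSeries σ k :=
  fun e => if isLog b then (e b : k) * MvPowerSeries.coeff e f
    else ((e b : k) + 1) * MvPowerSeries.coeff (e + Finsupp.single b 1) f

/-- The differential of a function as a logarithmic 1-form. -/
def dFnG (isLog : σ → Bool) (f : MvPowerSeries σ k) : σ → MvPowerSeries σ k :=
  fun b => DopG isLog b f

/-- Explicit value of a logarithmic 1-form. -/
def nu1G (W : σ → ℝ) (ω : σ → MvPowerSeries σ k) : EReal := ⨅ b, nuG W (ω b)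

/-- Wedge of two 1-forms, as an alternating 2-tensor. -/
def w2G (α β : σ → MvPowerSeries σ k) : σ → σ → MvPowerSeries σ k :=
  fun a b => α a * β b - α b * β a

/-- Exterior derivative of a 1-form, as an alternating 2-tensor. -/
def dF1G (isLog : σ → Bool) (ω : σ → MvPowerSeries σ k) : σ → σ → MvPowerSeries σ k :=
  fun a b => DopG isLog a (ω b) - DopG isLog b (ω a)

/-- Explicit value of a 2-form. -/
def nu2G (W : σ → ℝ) (Ω : σ → σ → MvPowerSeries σ k) : EReal := ⨅ a, ⨅ b, nuG W (Ω a b)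

/-- Wedge of a 1-form with a 2-form, as an alternating 3-tensor. -/
def w12G (θ : σ → MvPowerSeries σ k) (Ω : σ → σ → MvPowerSeries σ k) :
    σ → σ → σ → MvPowerSeries σ k :=
  fun a b c => θ a * Ω b c - θ b * Ω a c + θ c * Ω a b

/-- Explicit value of a 3-form. -/
def nu3G (W : σ → ℝ) (T : σ → σ → σ → MvPowerSeries σ k) : EReal :=
  ⨅ a, ⨅ b, ⨅ c, nuG W (T a b c)

/-- `f` is dominant at its own explicit value: the value is realized by a monomial
purely in the distinguished (`isX`) variables. -/
def DomAtG (W : σ → ℝ) (isX : σ → Prop) (f : MvPowerSeries σ k) : Prop :=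
  ∃ e : σ →₀ ℕ, (∀ i, ¬ isX i → e i = 0) ∧ MvPowerSeries.coeff e f ≠ 0 ∧
    ((wtG W e : ℝ) : EReal) = nuG W f

/-- `f` is `γ`-final dominant. -/
def FinalDomFnG (W : σ → ℝ) (isX : σ → Prop) (γ : ℝ) (f : MvPowerSeries σ k) : Prop :=
  nuG W f ≤ (γ : EReal) ∧ DomAtG W isX f

/-- A 1-form is dominant at its own explicit value: realized by a `dx_i/x_i`-coefficient. -/
def Dom1AtG (W : σ → ℝ) (isX : σ → Prop) (ω : σ → MvPowerSeries σ k) : Prop :=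
  ∃ i, isX i ∧ nuG W (ω i) = nu1G W ω ∧ DomAtG W isX (ω i)

/-- A 1-form is `γ`-final dominant. -/
def FinalDom1G (W : σ → ℝ) (isX : σ → Prop) (γ : ℝ) (ω : σ → MvPowerSeries σ k) : Prop :=
  nu1G W ω ≤ (γ : EReal) ∧ Dom1AtG W isX ω

end Core

abbrev Idx (r n : ℕ) := Sum (Fin r) (Fin n)

/-- Positive convex hull: convex hull plus the positive quadrant. -/
def posHullSet (S : Set (ℝ × ℝ)) : Set (ℝ × ℝ) :=
  {p | ∃ c ∈ convexHull ℝ S, ∃ d : ℝ × ℝ, 0 ≤ d.1 ∧ 0 ≤ d.2 ∧ p = c + d}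

/-- A positively convex polygon: generated by a cloud of points of `ℝ_{≥0} × ℤ_{≥0}`. -/
def PosConvex (N : Set (ℝ × ℝ)) : Prop :=
  ∃ C : Set (ℝ × ℝ), (∀ q ∈ C, 0 ≤ q.1 ∧ ∃ m : ℕ, q.2 = (m : ℝ)) ∧ N = posHullSet C

/-- Abscissa of the polygon at height `s` (`∞` if the row is empty). -/
def lamN (N : Set (ℝ × ℝ)) (s : ℤ) : EReal :=
  sInf {v : EReal | ∃ l : ℝ, (l, (s : ℝ)) ∈ N ∧ v = (l : EReal)}

/-- Sharpness of the polygon at height `s`: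
`α_N(s) = λ_N(s−1) + λ_N(s+1) − 2λ_N(s)`, with the conventions `α_N(s) = 0` when
`λ_N(s) = ∞` and `α_N(s) = ∞` when `λ_N(s) < ∞` and `λ_N(s−1) = ∞`. -/
def sharpN (N : Set (ℝ × ℝ)) (s : ℤ) : EReal :=
  if lamN N s = ⊤ then 0
  else if lamN N (s - 1) = ⊤ then ⊤
  else lamN N (s - 1) + lamN N (s + 1) - 2 * lamN N s

/-- `ς_δ(N) = inf{a + δ·b : (a,b) ∈ N}`. -/
def sigN (N : Set (ℝ × ℝ)) (δ : ℝ) : EReal :=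
  sInf {v : EReal | ∃ p ∈ N, v = ((p.1 + δ * p.2 : ℝ) : EReal)}

/-- `χ_δ(N)`: the ordinate of the highest vertex on the critical line of slope `−1/δ`. -/
def chiN (N : Set (ℝ × ℝ)) (δ : ℝ) : ℕ :=
  sSup {s : ℕ | lamN N (s : ℤ) + ((δ * s : ℝ) : EReal) = sigN N δ}

/-- The cloud of points `(ν_A(z·ω_s), s)` of a level family. -/
def cloudLev {k : Type} [Field k] {r l : ℕ} (w : Fin r → ℝ)
    (eta : ℕ → Idx r l → MvPowerSeries (Idx r l) k)
    (h : ℕ → MvPowerSeries (Idx r l) k) : Set (ℝ × ℝ) :=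
  {p | ∃ s : ℕ, p.2 = (s : ℝ) ∧
    (p.1 : EReal) = min (nu1G (Sum.elim w fun _ => (0:ℝ)) (eta s))
      (nuG (Sum.elim w fun _ => (0:ℝ)) (h s))}

/-- The Newton polygon of a level family. -/
def NPLev {k : Type} [Field k] {r l : ℕ} (w : Fin r → ℝ)
    (eta : ℕ → Idx r l → MvPowerSeries (Idx r l) k)
    (h : ℕ → MvPowerSeries (Idx r l) k) : Set (ℝ × ℝ) :=
  posHullSet (cloudLev w eta h)


namespace S13
set_option linter.unusedSectionVars false

open Finsupp

section wt
variable {σ : Type} (W : σ → ℝ)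

lemma wt_nonneg (hW : ∀ i, 0 ≤ W i) (e : σ →₀ ℕ) : 0 ≤ wtG W e :=
  Finset.sum_nonneg fun i _ => mul_nonneg (Nat.cast_nonneg _) (hW i)

lemma wt_add (e₁ e₂ : σ →₀ ℕ) : wtG W (e₁ + e₂) = wtG W e₁ + wtG W e₂ :=
  Finsupp.sum_add_index' (fun i => by simp) (fun i m n => by push_cast; ring)

lemma wt_single (a : σ) (n : ℕ) : wtG W (Finsupp.single a n) = n * W a :=
  Finsupp.sum_single_index (by simp)

lemma wt_zero : wtG W (0 : σ →₀ ℕ) = 0 := Finsupp.sum_zero_index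

/-- generic explicit value attached to a set of exponents -/
def ValP (P : (σ →₀ ℕ) → Prop) : EReal :=
  sInf {v : EReal | ∃ e, P e ∧ v = ((wtG W e : ℝ) : EReal)}

variable {W}

lemma le_ValP_iff {P : (σ →₀ ℕ) → Prop} {c : EReal} :
    c ≤ ValP W P ↔ ∀ e, P e → c ≤ ((wtG W e : ℝ) : EReal) := by
  rw [ValP, le_sInf_iff]
  constructor
  · intro H e he; exact H _ ⟨e, he, rfl⟩
  · rintro H v ⟨e, he, rfl⟩; exact H e he

lemma ValP_le {P : (σ →₀ ℕ) → Prop} {e : σ →₀ ℕ} (he : P e) :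
    ValP W P ≤ ((wtG W e : ℝ) : EReal) := sInf_le ⟨e, he, rfl⟩

lemma ValP_nonneg (hW : ∀ i, 0 ≤ W i) (P : (σ →₀ ℕ) → Prop) : (0 : EReal) ≤ ValP W P :=
  le_ValP_iff.2 fun e _ => by exact_mod_cast wt_nonneg W hW e

lemma ValP_attained
    (hfin : ∀ B : ℝ, {v : ℝ | (∃ e : σ →₀ ℕ, v = wtG W e) ∧ v ≤ B}.Finite)
    {P : (σ →₀ ℕ) → Prop} (hne : ∃ e, P e) :
    ∃ e, P e ∧ ((wtG W e : ℝ) : EReal) = ValP W P := by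
  obtain ⟨e₀, he₀⟩ := hne
  set v₀ := wtG W e₀ with hv₀
  have hfin' : {v : ℝ | (∃ e, P e ∧ v = wtG W e) ∧ v ≤ v₀}.Finite := by
    refine (hfin v₀).subset ?_
    rintro v ⟨⟨e, _, rfl⟩, hv⟩; exact ⟨⟨e, rfl⟩, hv⟩
  have hne' : {v : ℝ | (∃ e, P e ∧ v = wtG W e) ∧ v ≤ v₀}.Nonempty := ⟨v₀, ⟨e₀, he₀, rfl⟩, le_rfl⟩
  obtain ⟨m, hm, hmin⟩ := Set.exists_min_image _ id hfin' hne'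
  obtain ⟨⟨em, hem, hm'⟩, hmv₀⟩ := hm
  refine ⟨em, hem, ?_⟩
  refine le_antisymm ?_ (ValP_le hem)
  rw [← hm', le_ValP_iff]
  intro e he
  rcases le_or_gt (wtG W e) v₀ with hc | hc
  · exact_mod_cast hmin (wtG W e) ⟨⟨e, he, rfl⟩, hc⟩
  · exact_mod_cast le_trans hmv₀ hc.le

end wt

section fin
variable {r l : ℕ}

lemma wt_comap (w : Fin r → ℝ) (e : Idx r l →₀ ℕ) :
    wtG (Sum.elim w fun _ => (0:ℝ)) e =
      wtG w (e.comapDomain Sum.inl Sum.inl_injective.injOn) := by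
  induction e using Finsupp.induction with
  | zero => simp [wt_zero]
  | single_add a n e _ _ ih =>
    have hadd : (Finsupp.single a n + e).comapDomain (Sum.inl : Fin r → Idx r l)
        Sum.inl_injective.injOn =
        (Finsupp.single a n).comapDomain Sum.inl Sum.inl_injective.injOn +
          e.comapDomain Sum.inl Sum.inl_injective.injOn :=
      Finsupp.comapDomain_add_of_injective Sum.inl_injective _ _
    rw [wt_add, hadd, wt_add, ih]
    congr 1
    cases a with
    | inl i =>
      have : (Finsupp.single (Sum.inl i : Idx r l) n).comapDomain Sum.inl
          Sum.inl_injective.injOn = Finsupp.single i n := by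
        ext i'; simp [Finsupp.comapDomain_apply, Finsupp.single_apply, Sum.inl_injective.eq_iff]
      rw [this, wt_single, wt_single]; simp
    | inr j =>
      have : (Finsupp.single (Sum.inr j : Idx r l) n).comapDomain (Sum.inl : Fin r → Idx r l)
          Sum.inl_injective.injOn = 0 := by
        ext i; simp [Finsupp.comapDomain_apply, Finsupp.single_apply]
      rw [this, wt_zero, wt_single]; simp

lemma wfin (w : Fin r → ℝ) (hw : ∀ i, 0 < w i) (B : ℝ) :
    {v : ℝ | (∃ e : Idx r l →₀ ℕ, v = wtG (Sum.elim w fun _ => (0:ℝ)) e) ∧ v ≤ B}.Finite := by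
  classical
  set M : ℕ := Finset.univ.sup (fun i : Fin r => ⌈B / w i⌉₊) with hM
  have hfin : {I : Fin r →₀ ℕ | ∀ i, I i ≤ M}.Finite := by
    have : {I : Fin r →₀ ℕ | ∀ i, I i ≤ M} =
        (⇑Finsupp.equivFunOnFinite) ⁻¹' (Set.pi Set.univ fun _ : Fin r => Set.Iic M) := by
      ext I
      simp only [Set.mem_setOf_eq, Set.mem_preimage, Set.mem_pi, Set.mem_univ, Set.mem_Iic,
        forall_true_left, Finsupp.equivFunOnFinite_apply]
    rw [this]
    exact (Set.Finite.pi fun _ => Set.finite_Iic M).preimage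
      (Finsupp.equivFunOnFinite.injective.injOn)
  refine ((hfin.image (fun I => wtG w I))).subset ?_
  rintro v ⟨⟨e, rfl⟩, hv⟩
  set I := e.comapDomain Sum.inl Sum.inl_injective.injOn with hI
  refine ⟨I, ?_, (wt_comap w e).symm⟩
  intro i
  have h1 : (I i : ℝ) * w i ≤ wtG w I := by
    rcases Nat.eq_zero_or_pos (I i) with h | h
    · rw [h]; simpa using wt_nonneg w (fun j => (hw j).le) I
    · refine Finset.single_le_sum (f := fun j => ((I j : ℝ) * w j)) ?_ ?_
      · intro j _; exact mul_nonneg (Nat.cast_nonneg _) (hw j).le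
      · rw [Finsupp.mem_support_iff]; omega
  have h2 : wtG w I ≤ B := by rw [← wt_comap w e]; exact hv
  have h3 : (I i : ℝ) ≤ B / w i := by
    rw [le_div_iff₀ (hw i)]; exact h1.trans h2
  have h4 : I i ≤ ⌈B / w i⌉₊ := Nat.cast_le.mp (h3.trans (Nat.le_ceil _))
  exact le_trans h4 (Finset.le_sup (f := fun i : Fin r => ⌈B / w i⌉₊) (Finset.mem_univ i))

end fin

section series
variable {k : Type} [Field k] [CharZero k] {σ : Type} {W : σ → ℝ}

lemma le_nuG_iff {f : MvPowerSeries σ k} {c : EReal} :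
    c ≤ nuG W f ↔ ∀ e, MvPowerSeries.coeff e f ≠ 0 → c ≤ ((wtG W e : ℝ) : EReal) := by
  rw [nuG, le_sInf_iff]
  constructor
  · intro H e he; exact H _ ⟨e, he, rfl⟩
  · rintro H v ⟨e, he, rfl⟩; exact H e he

lemma nuG_le {f : MvPowerSeries σ k} {e : σ →₀ ℕ} (h : MvPowerSeries.coeff e f ≠ 0) :
    nuG W f ≤ ((wtG W e : ℝ) : EReal) := sInf_le ⟨e, h, rfl⟩

lemma coeff_mul_split {a b : MvPowerSeries σ k} {e : σ →₀ ℕ}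
    (h : MvPowerSeries.coeff e (a * b) ≠ 0) :
    ∃ e₁ e₂, e₁ + e₂ = e ∧ MvPowerSeries.coeff e₁ a ≠ 0 ∧ MvPowerSeries.coeff e₂ b ≠ 0 := by
  rw [MvPowerSeries.coeff_mul] at h
  obtain ⟨p, hp, hne⟩ := Finset.exists_ne_zero_of_sum_ne_zero h
  exact ⟨p.1, p.2, Finset.HasAntidiagonal.mem_antidiagonal.mp hp, left_ne_zero_of_mul hne,
    right_ne_zero_of_mul hne⟩

variable {f : MvPowerSeries σ k} {δ₀ : ℝ}

lemma pow_wt (hfw : ∀ e, MvPowerSeries.coeff e f ≠ 0 → δ₀ ≤ wtG W e) :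
    ∀ (n : ℕ) (e : σ →₀ ℕ), MvPowerSeries.coeff e ((-f) ^ n) ≠ 0 → (n : ℝ) * δ₀ ≤ wtG W e := by
  intro n
  induction n with
  | zero =>
    intro e h
    rw [pow_zero, MvPowerSeries.coeff_one] at h
    have he : e = 0 := by by_contra hne; simp [hne] at h
    simp [he, wt_zero]
  | succ n ih =>
    intro e h
    rw [pow_succ] at h
    obtain ⟨e₁, e₂, rfl, h1, h2⟩ := coeff_mul_split h
    have hb1 := ih e₁ h1
    have hb2 : δ₀ ≤ wtG W e₂ := by
      apply hfw
      intro hc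
      rw [map_neg, hc] at h2
      exact h2 (neg_zero)
    rw [wt_add]; push_cast; linarith

lemma mul_pow_bound (hfw : ∀ e, MvPowerSeries.coeff e f ≠ 0 → δ₀ ≤ wtG W e)
    {n : ℕ} {g : MvPowerSeries σ k} {e : σ →₀ ℕ}
    (h : MvPowerSeries.coeff e ((-f) ^ n * g) ≠ 0) :
    ∃ e₂, MvPowerSeries.coeff e₂ g ≠ 0 ∧ (n : ℝ) * δ₀ + wtG W e₂ ≤ wtG W e := by
  obtain ⟨e₁, e₂, rfl, h1, h2⟩ := coeff_mul_split h
  have hb := pow_wt hfw n e₁ h1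
  exact ⟨e₂, h2, by rw [wt_add]; linarith⟩

end series

section dop
variable {k : Type} [Field k] [CharZero k] {r l : ℕ} {W : Idx r l → ℝ}
variable {f : MvPowerSeries (Idx r l) k} {δ₀ : ℝ}

lemma dop_wt (hWy : ∀ j : Fin l, W (Sum.inr j) = 0)
    (hfw : ∀ e, MvPowerSeries.coeff e f ≠ 0 → δ₀ ≤ wtG W e) (b : Idx r l) (e : Idx r l →₀ ℕ)
    (h : MvPowerSeries.coeff e (DopG (fun u : Idx r l => u.isLeft) b f) ≠ 0) :
    δ₀ ≤ wtG W e := by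
  have hco : MvPowerSeries.coeff e (DopG (fun u : Idx r l => u.isLeft) b f) =
      if (b.isLeft : Bool) then (e b : k) * MvPowerSeries.coeff e f
      else ((e b : k) + 1) * MvPowerSeries.coeff (e + Finsupp.single b 1) f := rfl
  rw [hco] at h
  cases b with
  | inl i =>
    rw [if_pos (by simp)] at h
    exact hfw e (right_ne_zero_of_mul h)
  | inr j =>
    rw [if_neg (by simp)] at h
    have h2 := right_ne_zero_of_mul h
    have := hfw _ h2
    rwa [wt_add, wt_single, hWy j, mul_zero, add_zero] at this

lemma mul_pow_dop_bound (hWy : ∀ j : Fin l, W (Sum.inr j) = 0)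
    (hfw : ∀ e, MvPowerSeries.coeff e f ≠ 0 → δ₀ ≤ wtG W e)
    {n : ℕ} {g : MvPowerSeries (Idx r l) k} {b : Idx r l} {e : Idx r l →₀ ℕ}
    (h : MvPowerSeries.coeff e
        ((-f) ^ n * (g * DopG (fun u : Idx r l => u.isLeft) b f)) ≠ 0) :
    ∃ e₂, MvPowerSeries.coeff e₂ g ≠ 0 ∧ ((n : ℝ) + 1) * δ₀ + wtG W e₂ ≤ wtG W e := by
  obtain ⟨e₁, e₂', rfl, h1, h2⟩ := coeff_mul_split h
  obtain ⟨e₃, e₄, rfl, h3, h4⟩ := coeff_mul_split h2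
  have hb1 := pow_wt hfw n e₁ h1
  have hb4 := dop_wt hWy hfw b e₄ h4
  exact ⟨e₃, h3, by rw [wt_add, wt_add]; linarith⟩

end dop

section fam
variable {k : Type} [Field k] [CharZero k] {r l : ℕ}

/-- exponents effectively appearing at level `s` -/
def MonF (eta : ℕ → Idx r l → MvPowerSeries (Idx r l) k)
    (h : ℕ → MvPowerSeries (Idx r l) k) (s : ℕ) (e : Idx r l →₀ ℕ) : Prop :=
  (∃ b, MvPowerSeries.coeff e (eta s b) ≠ 0) ∨ MvPowerSeries.coeff e (h s) ≠ 0

def ValF (W : Idx r l → ℝ) (eta : ℕ → Idx r l → MvPowerSeries (Idx r l) k)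
    (h : ℕ → MvPowerSeries (Idx r l) k) (s : ℕ) : EReal := ValP W (MonF eta h s)

variable {W : Idx r l → ℝ} {eta eta' : ℕ → Idx r l → MvPowerSeries (Idx r l) k}
variable {h h' : ℕ → MvPowerSeries (Idx r l) k}

lemma minEq (s : ℕ) :
    min (nu1G W (eta s)) (nuG W (h s)) = ValF W eta h s := by
  apply le_antisymm
  · rw [ValF, le_ValP_iff]
    rintro e (⟨b, hb⟩ | hh)
    · exact le_trans (min_le_left _ _) (le_trans (iInf_le _ b) (nuG_le hb))
    · exact le_trans (min_le_right _ _) (nuG_le hh)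
  · rw [le_min_iff]
    constructor
    · refine le_iInf fun b => le_nuG_iff.2 fun e he => ValP_le (Or.inl ⟨b, he⟩)
    · exact le_nuG_iff.2 fun e he => ValP_le (Or.inr he)

lemma ValF_le {s : ℕ} {e : Idx r l →₀ ℕ} (he : MonF (k := k) eta h s e) :
    ValF W eta h s ≤ ((wtG W e : ℝ) : EReal) := ValP_le he

variable {f : MvPowerSeries (Idx r l) k} {δ₀ : ℝ}

/-- every exponent of the primed family at level `s` is controlled from level `t ≥ s` -/
lemma bound_eta' (hWy : ∀ j : Fin l, W (Sum.inr j) = 0)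
    (hfw : ∀ e, MvPowerSeries.coeff e f ≠ 0 → δ₀ ≤ wtG W e)
    (heta' : ∀ (s : ℕ) (b : Idx r l) (e : Idx r l →₀ ℕ),
      MvPowerSeries.coeff e (eta' s b) =
        (finsum fun t : ℕ => if s ≤ t then
            (Nat.choose t s : k) * MvPowerSeries.coeff e ((-f) ^ (t - s) * eta t b)
          else 0)
        - (finsum fun t : ℕ => if s + 1 ≤ t then
            (Nat.choose (t - 1) s : k) *
              MvPowerSeries.coeff e
                ((-f) ^ (t - s - 1) * (h t * DopG (fun u => u.isLeft) b f))
          else 0))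
    (s : ℕ) (b : Idx r l) (e : Idx r l →₀ ℕ)
    (hne : MvPowerSeries.coeff e (eta' s b) ≠ 0) :
    ∃ t, s ≤ t ∧ ∃ e₂, MonF (k := k) eta h t e₂ ∧
      ((t : ℝ) - s) * δ₀ + wtG W e₂ ≤ wtG W e := by
  by_contra hcon
  push_neg at hcon
  apply hne
  rw [heta' s b e]
  have h1 : (finsum fun t : ℕ => if s ≤ t then
      (Nat.choose t s : k) * MvPowerSeries.coeff e ((-f) ^ (t - s) * eta t b) else 0) = 0 := by
    apply finsum_eq_zero_of_forall_eq_zero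
    intro t
    split_ifs with hst
    · rcases eq_or_ne (MvPowerSeries.coeff e ((-f) ^ (t - s) * eta t b)) 0 with hz | hz
      · rw [hz, mul_zero]
      · exfalso
        obtain ⟨e₂, he₂, hb⟩ := mul_pow_bound hfw hz
        have hc : ((t - s : ℕ) : ℝ) = (t : ℝ) - s := by
          push_cast [Nat.cast_sub hst]; ring
        have hlt := hcon t hst e₂ (Or.inl ⟨b, he₂⟩)
        rw [hc] at hb; linarith
    · rfl
  have h2 : (finsum fun t : ℕ => if s + 1 ≤ t then
      (Nat.choose (t - 1) s : k) * MvPowerSeries.coeff e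
        ((-f) ^ (t - s - 1) * (h t * DopG (fun u => u.isLeft) b f)) else 0) = 0 := by
    apply finsum_eq_zero_of_forall_eq_zero
    intro t
    split_ifs with hst
    · rcases eq_or_ne (MvPowerSeries.coeff e
        ((-f) ^ (t - s - 1) * (h t * DopG (fun u => u.isLeft) b f))) 0 with hz | hz
      · rw [hz, mul_zero]
      · exfalso
        obtain ⟨e₂, he₂, hb⟩ := mul_pow_dop_bound hWy hfw hz
        have hc : ((t - s - 1 : ℕ) : ℝ) + 1 = (t : ℝ) - s := by
          have h6 : (t - s - 1) + 1 + s = t := by omega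
          have h7 := congrArg (Nat.cast : ℕ → ℝ) h6
          push_cast at h7; linarith
        have hlt := hcon t (le_trans (Nat.le_succ s) hst) e₂ (Or.inr he₂)
        rw [hc] at hb; linarith
    · rfl
  rw [h1, h2]; simp

lemma bound_h' (hfw : ∀ e, MvPowerSeries.coeff e f ≠ 0 → δ₀ ≤ wtG W e)
    (hh' : ∀ (s : ℕ) (e : Idx r l →₀ ℕ),
      MvPowerSeries.coeff e (h' s) =
        finsum fun t : ℕ => if 1 ≤ s ∧ s ≤ t then
            (Nat.choose (t - 1) (s - 1) : k) *
              MvPowerSeries.coeff e ((-f) ^ (t - s) * h t)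
          else 0)
    (s : ℕ) (e : Idx r l →₀ ℕ)
    (hne : MvPowerSeries.coeff e (h' s) ≠ 0) :
    ∃ t, s ≤ t ∧ ∃ e₂, MonF (k := k) eta h t e₂ ∧
      ((t : ℝ) - s) * δ₀ + wtG W e₂ ≤ wtG W e := by
  by_contra hcon
  push_neg at hcon
  apply hne
  rw [hh' s e]
  apply finsum_eq_zero_of_forall_eq_zero
  intro t
  split_ifs with hst
  · rcases eq_or_ne (MvPowerSeries.coeff e ((-f) ^ (t - s) * h t)) 0 with hz | hz
    · rw [hz, mul_zero]
    · exfalso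
      obtain ⟨e₂, he₂, hb⟩ := mul_pow_bound hfw hz
      have hc : ((t - s : ℕ) : ℝ) = (t : ℝ) - s := by
        push_cast [Nat.cast_sub hst.2]; ring
      have hlt := hcon t hst.2 e₂ (Or.inr he₂)
      rw [hc] at hb; linarith
  · rfl

lemma coeff_eta'_eq (hWy : ∀ j : Fin l, W (Sum.inr j) = 0)
    (hfw : ∀ e, MvPowerSeries.coeff e f ≠ 0 → δ₀ ≤ wtG W e)
    (heta' : ∀ (s : ℕ) (b : Idx r l) (e : Idx r l →₀ ℕ),
      MvPowerSeries.coeff e (eta' s b) =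
        (finsum fun t : ℕ => if s ≤ t then
            (Nat.choose t s : k) * MvPowerSeries.coeff e ((-f) ^ (t - s) * eta t b)
          else 0)
        - (finsum fun t : ℕ => if s + 1 ≤ t then
            (Nat.choose (t - 1) s : k) *
              MvPowerSeries.coeff e
                ((-f) ^ (t - s - 1) * (h t * DopG (fun u => u.isLeft) b f))
          else 0))
    (s : ℕ) (b : Idx r l) (e : Idx r l →₀ ℕ)
    (Hstrict : ∀ t, s + 1 ≤ t → ∀ e₂, MonF (k := k) eta h t e₂ →
      wtG W e < ((t : ℝ) - s) * δ₀ + wtG W e₂) :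
    MvPowerSeries.coeff e (eta' s b) = MvPowerSeries.coeff e (eta s b) := by
  rw [heta' s b e]
  have h1 : (finsum fun t : ℕ => if s ≤ t then
      (Nat.choose t s : k) * MvPowerSeries.coeff e ((-f) ^ (t - s) * eta t b) else 0) =
      MvPowerSeries.coeff e (eta s b) := by
    rw [finsum_eq_single _ s ?_]
    · simp [Nat.sub_self]
    · intro t hts
      split_ifs with hst
      · rcases eq_or_ne (MvPowerSeries.coeff e ((-f) ^ (t - s) * eta t b)) 0 with hz | hz
        · rw [hz, mul_zero]
        · exfalso
          obtain ⟨e₂, he₂, hb⟩ := mul_pow_bound hfw hz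
          have hst' : s + 1 ≤ t := by omega
          have hc : ((t - s : ℕ) : ℝ) = (t : ℝ) - s := by
            push_cast [Nat.cast_sub hst]; ring
          have hlt := Hstrict t hst' e₂ (Or.inl ⟨b, he₂⟩)
          rw [hc] at hb; linarith
      · rfl
  have h2 : (finsum fun t : ℕ => if s + 1 ≤ t then
      (Nat.choose (t - 1) s : k) * MvPowerSeries.coeff e
        ((-f) ^ (t - s - 1) * (h t * DopG (fun u => u.isLeft) b f)) else 0) = 0 := by
    apply finsum_eq_zero_of_forall_eq_zero
    intro t
    split_ifs with hst
    · rcases eq_or_ne (MvPowerSeries.coeff e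
        ((-f) ^ (t - s - 1) * (h t * DopG (fun u => u.isLeft) b f))) 0 with hz | hz
      · rw [hz, mul_zero]
      · exfalso
        obtain ⟨e₂, he₂, hb⟩ := mul_pow_dop_bound hWy hfw hz
        have hc : ((t - s - 1 : ℕ) : ℝ) + 1 = (t : ℝ) - s := by
          have h6 : (t - s - 1) + 1 + s = t := by omega
          have h7 := congrArg (Nat.cast : ℕ → ℝ) h6
          push_cast at h7; linarith
        have hlt := Hstrict t hst e₂ (Or.inr he₂)
        rw [hc] at hb; linarith
    · rfl
  rw [h1, h2, sub_zero]

lemma coeff_h'_eq (hfw : ∀ e, MvPowerSeries.coeff e f ≠ 0 → δ₀ ≤ wtG W e)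
    (hh0 : h 0 = 0)
    (hh' : ∀ (s : ℕ) (e : Idx r l →₀ ℕ),
      MvPowerSeries.coeff e (h' s) =
        finsum fun t : ℕ => if 1 ≤ s ∧ s ≤ t then
            (Nat.choose (t - 1) (s - 1) : k) *
              MvPowerSeries.coeff e ((-f) ^ (t - s) * h t)
          else 0)
    (s : ℕ) (e : Idx r l →₀ ℕ)
    (Hstrict : ∀ t, s + 1 ≤ t → ∀ e₂, MonF (k := k) eta h t e₂ →
      wtG W e < ((t : ℝ) - s) * δ₀ + wtG W e₂) :
    MvPowerSeries.coeff e (h' s) = MvPowerSeries.coeff e (h s) := by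
  rw [hh' s e]
  cases s with
  | zero =>
    rw [hh0, map_zero]
    apply finsum_eq_zero_of_forall_eq_zero
    intro t
    rw [if_neg (by omega)]
  | succ n =>
    rw [finsum_eq_single _ (n + 1) ?_]
    · simp [Nat.sub_self]
    · intro t hts
      split_ifs with hst
      · rcases eq_or_ne (MvPowerSeries.coeff e ((-f) ^ (t - (n + 1)) * h t)) 0 with hz | hz
        · rw [hz, mul_zero]
        · exfalso
          obtain ⟨e₂, he₂, hb⟩ := mul_pow_bound hfw hz
          have hst' : (n + 1) + 1 ≤ t := by omega
          have hc : ((t - (n + 1) : ℕ) : ℝ) = (t : ℝ) - (n + 1) := by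
            push_cast [Nat.cast_sub hst.2]; ring
          have hlt := Hstrict t hst' e₂ (Or.inr he₂)
          rw [hc] at hb; push_cast at hlt ⊢; linarith
      · rfl

end fam

section ehelp

lemma ereal_add_coe_eq {a : EReal} {b c : ℝ} (hr : a + (c : EReal) = (b : EReal)) :
    a = ((b - c : ℝ) : EReal) := by
  induction a using EReal.rec with
  | bot => rw [EReal.bot_add] at hr; exact absurd hr (by simp)
  | coe x =>
    rw [← EReal.coe_add] at hr
    have : x + c = b := by exact_mod_cast hr
    have : x = b - c := by linarith
    exact_mod_cast this
  | top => rw [EReal.top_add_coe] at hr; exact absurd hr (by simp)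

lemma ereal_coe_toReal {a : EReal} {c : ℝ} (h0 : 0 ≤ a) (hc : a ≤ (c : EReal)) :
    a = ((a.toReal : ℝ) : EReal) := by
  refine (EReal.coe_toReal ?_ ?_).symm
  · exact (lt_of_le_of_lt hc (EReal.coe_lt_top c)).ne
  · exact (lt_of_lt_of_le (EReal.coe_zero ▸ EReal.bot_lt_coe 0) h0).ne'

end ehelp

section poly

/-- abstract cloud of a height function -/
def Cl (ν : ℕ → EReal) : Set (ℝ × ℝ) := {p | ∃ s : ℕ, p.2 = (s : ℝ) ∧ (p.1 : EReal) = ν s}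

lemma mem_N {ν : ℕ → EReal} {s : ℕ} {x : ℝ} (hx : (x : EReal) = ν s) :
    (x, (s : ℝ)) ∈ posHullSet (Cl ν) :=
  ⟨(x, (s : ℝ)), subset_convexHull ℝ _ ⟨s, rfl, hx⟩, (0, 0), le_rfl, le_rfl, by simp⟩

lemma N_mono {ν : ℕ → EReal} {p : ℝ × ℝ} (hp : p ∈ posHullSet (Cl ν)) {a b : ℝ}
    (ha : 0 ≤ a) (hb : 0 ≤ b) : (p.1 + a, p.2 + b) ∈ posHullSet (Cl ν) := by
  obtain ⟨c, hc, d, hd1, hd2, rfl⟩ := hp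
  refine ⟨c, hc, (d.1 + a, d.2 + b), by simpa using add_nonneg hd1 ha,
    by simpa using add_nonneg hd2 hb, ?_⟩
  simp only [Prod.mk_add_mk, Prod.ext_iff, Prod.fst_add, Prod.snd_add]
  constructor <;> ring

lemma N_combo {ν : ℕ → EReal} {p q : ℝ × ℝ} (hp : p ∈ posHullSet (Cl ν))
    (hq : q ∈ posHullSet (Cl ν)) {a b : ℝ} (ha : 0 ≤ a) (hb : 0 ≤ b) (hab : a + b = 1) :
    (a * p.1 + b * q.1, a * p.2 + b * q.2) ∈ posHullSet (Cl ν) := by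
  obtain ⟨c, hc, d, hd1, hd2, rfl⟩ := hp
  obtain ⟨c', hc', d', hd1', hd2', rfl⟩ := hq
  refine ⟨a • c + b • c', (convex_convexHull ℝ _) hc hc' ha hb hab,
    (a * d.1 + b * d'.1, a * d.2 + b * d'.2),
    by simpa using add_nonneg (mul_nonneg ha hd1) (mul_nonneg hb hd1'),
    by simpa using add_nonneg (mul_nonneg ha hd2) (mul_nonneg hb hd2'), ?_⟩
  simp only [Prod.ext_iff, Prod.fst_add, Prod.snd_add, Prod.smul_fst, Prod.smul_snd,
    Prod.mk_add_mk, smul_eq_mul]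
  constructor <;> ring

lemma N_bound {ν : ℕ → EReal} {c δ : ℝ} (hδ : 0 ≤ δ)
    (hb : ∀ s : ℕ, (c : EReal) ≤ ν s + ((δ * s : ℝ) : EReal)) :
    ∀ p ∈ posHullSet (Cl ν), c ≤ p.1 + δ * p.2 := by
  rintro p ⟨q, hq, d, hd1, hd2, rfl⟩
  have hlin : IsLinearMap ℝ (fun p : ℝ × ℝ => p.1 + δ * p.2) := by
    constructor
    · intro u v; simp only [Prod.fst_add, Prod.snd_add]; ring
    · intro a u; simp only [Prod.smul_fst, Prod.smul_snd, smul_eq_mul]; ring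
  have hhull : q ∈ {p : ℝ × ℝ | c ≤ p.1 + δ * p.2} := by
    refine convexHull_min ?_ (convex_halfSpace_ge hlin c) hq
    rintro ⟨x, y⟩ ⟨s, rfl, hx⟩
    have := hb s
    rw [← hx, ← EReal.coe_add] at this
    have h2 : c ≤ x + δ * s := by exact_mod_cast this
    exact h2
  have : c ≤ q.1 + δ * q.2 := hhull
  simp only [Prod.fst_add, Prod.snd_add]
  nlinarith [mul_nonneg hδ hd2]

lemma lam_eq (ν : ℕ → EReal) (s : ℕ) : lamN (posHullSet (Cl ν)) (s : ℤ) =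
    sInf {v : EReal | ∃ x : ℝ, (x, (s : ℝ)) ∈ posHullSet (Cl ν) ∧ v = (x : EReal)} := by
  simp only [lamN, Int.cast_natCast]

lemma lam_le {ν : ℕ → EReal} {s : ℕ} {x : ℝ} (hx : (x, (s : ℝ)) ∈ posHullSet (Cl ν)) :
    lamN (posHullSet (Cl ν)) (s : ℤ) ≤ (x : EReal) := by
  rw [lam_eq]; exact sInf_le ⟨x, hx, rfl⟩

lemma le_lam_iff {ν : ℕ → EReal} {s : ℕ} {c : EReal} :
    c ≤ lamN (posHullSet (Cl ν)) (s : ℤ) ↔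
      ∀ x : ℝ, (x, (s : ℝ)) ∈ posHullSet (Cl ν) → c ≤ (x : EReal) := by
  rw [lam_eq, le_sInf_iff]
  constructor
  · intro H x hx; exact H _ ⟨x, hx, rfl⟩
  · rintro H v ⟨x, hx, rfl⟩; exact H x hx

lemma lam_lt {ν : ℕ → EReal} {s : ℕ} {c : EReal}
    (h : lamN (posHullSet (Cl ν)) (s : ℤ) < c) :
    ∃ x : ℝ, (x, (s : ℝ)) ∈ posHullSet (Cl ν) ∧ (x : EReal) < c := by
  rw [lam_eq] at h
  obtain ⟨v, ⟨x, hx, rfl⟩, hv⟩ := sInf_lt_iff.mp h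
  exact ⟨x, hx, hv⟩

end poly

section crit
variable {ν : ℕ → EReal} {δ₀ Sr : ℝ} {sst : ℕ}

lemma lam_le_of_ge (hSst : ν sst + ((δ₀ * sst : ℝ) : EReal) = (Sr : EReal))
    (s : ℕ) (hs : sst ≤ s) :
    lamN (posHullSet (Cl ν)) (s : ℤ) ≤ ((Sr - δ₀ * sst : ℝ) : EReal) := by
  have hpt : ((Sr - δ₀ * sst : ℝ), ((sst : ℕ) : ℝ)) ∈ posHullSet (Cl ν) :=
    mem_N (ereal_add_coe_eq hSst).symm
  have hmem := N_mono hpt (a := 0) (b := ((s : ℝ) - (sst : ℝ)))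
    le_rfl (by simp; exact_mod_cast hs)
  simp only [add_zero] at hmem
  have hco : ((sst : ℕ) : ℝ) + ((s : ℝ) - (sst : ℝ)) = (s : ℝ) := by ring
  rw [hco] at hmem
  exact lam_le hmem

lemma lam_ge_S (hδ₀ : 0 < δ₀)
    (hSb : ∀ t : ℕ, (Sr : EReal) ≤ ν t + ((δ₀ * t : ℝ) : EReal)) (s : ℕ) :
    ((Sr - δ₀ * s : ℝ) : EReal) ≤ lamN (posHullSet (Cl ν)) (s : ℤ) := by
  rw [le_lam_iff]
  intro x hx
  have := N_bound hδ₀.le hSb _ hx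
  simp only at this
  exact_mod_cast (by linarith : Sr - δ₀ * s ≤ x)

lemma lam_sst_eq (hδ₀ : 0 < δ₀)
    (hSb : ∀ t : ℕ, (Sr : EReal) ≤ ν t + ((δ₀ * t : ℝ) : EReal))
    (hSst : ν sst + ((δ₀ * sst : ℝ) : EReal) = (Sr : EReal)) :
    lamN (posHullSet (Cl ν)) (sst : ℤ) = ((Sr - δ₀ * sst : ℝ) : EReal) :=
  le_antisymm (lam_le_of_ge hSst sst le_rfl) (lam_ge_S hδ₀ hSb sst)

lemma lam_nonneg (hν0 : ∀ s, 0 ≤ ν s) (s : ℕ) :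
    (0 : EReal) ≤ lamN (posHullSet (Cl ν)) (s : ℤ) := by
  rw [le_lam_iff]
  intro x hx
  have hb : ∀ t : ℕ, ((0:ℝ) : EReal) ≤ ν t + (((0:ℝ) * t : ℝ) : EReal) := by
    intro t; rw [zero_mul]; simpa using hν0 t
  have := N_bound le_rfl hb _ hx
  simp only [zero_mul, add_zero] at this
  exact_mod_cast this

lemma lam_mono (t₁ t₂ : ℕ) (h : t₁ ≤ t₂) :
    lamN (posHullSet (Cl ν)) (t₂ : ℤ) ≤ lamN (posHullSet (Cl ν)) (t₁ : ℤ) := by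
  rw [lam_eq ν t₁]
  apply le_sInf
  rintro v ⟨x, hx, rfl⟩
  have hmem := N_mono hx (a := 0) (b := ((t₂ : ℝ) - (t₁ : ℝ))) le_rfl (by simp; exact_mod_cast h)
  simp only [add_zero] at hmem
  have hco : ((t₁ : ℕ) : ℝ) + ((t₂ : ℝ) - (t₁ : ℝ)) = (t₂ : ℝ) := by ring
  rw [hco] at hmem
  exact lam_le hmem

lemma tilt (hν0 : ∀ s, 0 ≤ ν s) (hδ₀ : 0 < δ₀) (hSr : 0 ≤ Sr)
    (hSb : ∀ t : ℕ, (Sr : EReal) ≤ ν t + ((δ₀ * t : ℝ) : EReal))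
    (hmax : ∀ t : ℕ, ν t + ((δ₀ * t : ℝ) : EReal) = (Sr : EReal) → t ≤ sst) :
    ∃ γ : ℝ, 0 < γ ∧ γ < δ₀ ∧
      ∀ t : ℕ, ((Sr - γ * sst : ℝ) : EReal) ≤ ν t + (((δ₀ - γ) * t : ℝ) : EReal) := by
  classical
  set T₀ : ℕ := sst + 1 + ⌈2 * Sr / δ₀⌉₊ with hT₀
  set exr : ℕ → ℝ := fun t => if ν t = ⊤ then 1 else (ν t).toReal + δ₀ * t - Sr with hexr
  have hνreal : ∀ t : ℕ, ν t ≠ ⊤ → ν t = (((ν t).toReal : ℝ) : EReal) := by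
    intro t ht
    exact (EReal.coe_toReal ht
      ((lt_of_lt_of_le (EReal.coe_zero ▸ EReal.bot_lt_coe 0) (hν0 t)).ne')).symm
  have hexr_pos : ∀ t : ℕ, sst < t → 0 < exr t := by
    intro t ht
    by_cases htop : ν t = ⊤
    · simp [hexr, htop]
    · have h1 := hSb t
      have h2 : ν t + ((δ₀ * t : ℝ) : EReal) ≠ (Sr : EReal) := fun hc => absurd (hmax t hc) (by omega)
      rw [hνreal t htop, ← EReal.coe_add] at h1 h2
      have h3 : Sr ≤ (ν t).toReal + δ₀ * t := by exact_mod_cast h1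
      have h4 : (ν t).toReal + δ₀ * t ≠ Sr := fun hc => h2 (by exact_mod_cast hc)
      simp only [hexr, htop, if_false]
      have : Sr < (ν t).toReal + δ₀ * t := lt_of_le_of_ne h3 (Ne.symm h4)
      linarith
  set F : Finset ℕ := Finset.Ico (sst + 1) T₀ with hF
  set γ₀ : ℝ := if hFne : F.Nonempty then
      min 1 (F.inf' hFne (fun t => exr t / ((t : ℝ) - sst))) else 1 with hγ₀
  have hγ₀pos : 0 < γ₀ := by
    rw [hγ₀]
    split_ifs with hFne
    · refine lt_min one_pos ?_
      rw [Finset.lt_inf'_iff]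
      intro t htF
      have htlow : sst + 1 ≤ t := (Finset.mem_Ico.mp htF).1
      have : (0:ℝ) < (t:ℝ) - sst := by
        have : sst < t := by omega
        have := Nat.cast_lt (α := ℝ).mpr this
        linarith
      exact div_pos (hexr_pos t (by omega)) this
    · exact one_pos
  set γ : ℝ := min (δ₀ / 2) γ₀ with hγ
  have hγpos : 0 < γ := lt_min (by linarith) hγ₀pos
  have hγlt : γ < δ₀ := lt_of_le_of_lt (min_le_left _ _) (by linarith)
  refine ⟨γ, hγpos, hγlt, ?_⟩
  intro t
  by_cases htop : ν t = ⊤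
  · rw [htop, EReal.top_add_coe]; exact le_top
  · rw [hνreal t htop, ← EReal.coe_add, EReal.coe_le_coe_iff]
    have hν0t : 0 ≤ (ν t).toReal := by
      have := hν0 t
      rw [hνreal t htop] at this
      exact_mod_cast this
    rcases le_or_gt t sst with hc | hc
    · -- t ≤ sst
      have h1 := hSb t
      rw [hνreal t htop, ← EReal.coe_add] at h1
      have h3 : Sr ≤ (ν t).toReal + δ₀ * t := by exact_mod_cast h1
      have htr : (t : ℝ) ≤ (sst : ℝ) := by exact_mod_cast hc
      nlinarith [hγpos]
    · rcases lt_or_ge t T₀ with hc2 | hc2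
      · -- sst < t < T₀
        have htF : t ∈ F := Finset.mem_Ico.mpr ⟨by omega, hc2⟩
        have hFne : F.Nonempty := ⟨t, htF⟩
        have hγle : γ ≤ exr t / ((t : ℝ) - sst) := by
          calc γ ≤ γ₀ := min_le_right _ _
          _ ≤ _ := by
            rw [hγ₀, dif_pos hFne]
            exact le_trans (min_le_right _ _) (Finset.inf'_le _ htF)
        have htpos : (0:ℝ) < (t:ℝ) - sst := by
          have := Nat.cast_lt (α := ℝ).mpr hc
          linarith
        have h5 : γ * ((t:ℝ) - sst) ≤ exr t := by
          rw [le_div_iff₀ htpos] at hγle; linarith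
        have h6 : exr t = (ν t).toReal + δ₀ * t - Sr := by simp [hexr, htop]
        nlinarith
      · -- T₀ ≤ t
        have ht2 : 2 * Sr / δ₀ ≤ (t : ℝ) := by
          calc 2 * Sr / δ₀ ≤ (⌈2 * Sr / δ₀⌉₊ : ℝ) := Nat.le_ceil _
          _ ≤ (t : ℝ) := by exact_mod_cast le_trans (by omega) hc2
        have h7 : 2 * Sr ≤ δ₀ * t := by
          rw [div_le_iff₀ hδ₀] at ht2; linarith
        have hγ2 : γ ≤ δ₀ / 2 := min_le_left _ _
        have htsst : (sst : ℝ) ≤ (t : ℝ) := by exact_mod_cast le_trans (by omega) hc2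
        have htpos : (0:ℝ) ≤ (t:ℝ) := Nat.cast_nonneg t
        nlinarith
end crit

section crit2
variable {ν : ℕ → EReal} {δ₀ Sr : ℝ} {sst : ℕ}

lemma N_strict (hν0 : ∀ s, 0 ≤ ν s) (hδ₀ : 0 < δ₀) (hSr : 0 ≤ Sr)
    (hSb : ∀ t : ℕ, (Sr : EReal) ≤ ν t + ((δ₀ * t : ℝ) : EReal))
    (hmax : ∀ t : ℕ, ν t + ((δ₀ * t : ℝ) : EReal) = (Sr : EReal) → t ≤ sst) :
    ∃ γ : ℝ, 0 < γ ∧ γ < δ₀ ∧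
      ∀ (u : ℕ) (x : ℝ), (x, (u : ℝ)) ∈ posHullSet (Cl ν) →
        Sr + γ * ((u : ℝ) - sst) ≤ x + δ₀ * u := by
  obtain ⟨γ, hγ1, hγ2, hγ3⟩ := tilt hν0 hδ₀ hSr hSb hmax
  refine ⟨γ, hγ1, hγ2, fun u x hx => ?_⟩
  have := N_bound (c := Sr - γ * sst) (by linarith : (0:ℝ) ≤ δ₀ - γ) hγ3 _ hx
  simp only at this
  linarith

lemma gmono_pt (hδ₀ : 0 < δ₀)
    (hSb : ∀ t : ℕ, (Sr : EReal) ≤ ν t + ((δ₀ * t : ℝ) : EReal))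
    (hSst : ν sst + ((δ₀ * sst : ℝ) : EReal) = (Sr : EReal))
    (s u : ℕ) (hs : sst ≤ s) (hsu : s ≤ u) {x : ℝ}
    (hx : (x, (u : ℝ)) ∈ posHullSet (Cl ν)) :
    lamN (posHullSet (Cl ν)) (s : ℤ) ≤ ((x + δ₀ * u - δ₀ * s : ℝ) : EReal) := by
  rcases eq_or_lt_of_le hsu with rfl | hlt
  · have : (x + δ₀ * s - δ₀ * s : ℝ) = x := by ring
    rw [this]; exact lam_le hx
  · have husst : (sst : ℝ) < (u : ℝ) := by exact_mod_cast lt_of_le_of_lt hs hlt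
    have hssst : (sst : ℝ) ≤ (s : ℝ) := by exact_mod_cast hs
    have hsur : (s : ℝ) < (u : ℝ) := by exact_mod_cast hlt
    set θ : ℝ := ((s : ℝ) - sst) / ((u : ℝ) - sst) with hθ
    have hθ0 : 0 ≤ θ := div_nonneg (by linarith) (by linarith)
    have hθ1 : θ < 1 := by
      rw [hθ, div_lt_one (by linarith)]; linarith
    have hne : (u : ℝ) - sst ≠ 0 := by linarith
    have hθs : (s : ℝ) = sst + θ * ((u : ℝ) - sst) := by
      rw [hθ, div_mul_cancel₀ _ hne]; ring
    have hpt : ((Sr - δ₀ * sst : ℝ), ((sst : ℕ) : ℝ)) ∈ posHullSet (Cl ν) :=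
      mem_N (ereal_add_coe_eq hSst).symm
    have hcombo := N_combo hpt hx (a := 1 - θ) (b := θ) (by linarith) hθ0 (by ring)
    simp only at hcombo
    have hc2 : (1 - θ) * ((sst : ℕ) : ℝ) + θ * (u : ℝ) = (s : ℝ) := by
      rw [hθs]; ring
    rw [hc2] at hcombo
    have hlam := lam_le hcombo
    have hxS : 0 ≤ x + δ₀ * u - Sr := by
      have := N_bound hδ₀.le hSb _ hx
      simp only at this; linarith
    have key : (1 - θ) * (Sr - δ₀ * sst) + θ * x =
        x + δ₀ * u - δ₀ * ((sst : ℝ) + θ * ((u : ℝ) - sst)) - (1 - θ) * (x + δ₀ * u - Sr) := by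
      ring
    refine le_trans hlam ?_
    rw [EReal.coe_le_coe_iff, key, ← hθs]
    nlinarith [mul_nonneg (by linarith : (0:ℝ) ≤ 1 - θ) hxS]

lemma gstrict_pt (hν0 : ∀ s, 0 ≤ ν s) (hδ₀ : 0 < δ₀) (hSr : 0 ≤ Sr)
    (hSb : ∀ t : ℕ, (Sr : EReal) ≤ ν t + ((δ₀ * t : ℝ) : EReal))
    (hSst : ν sst + ((δ₀ * sst : ℝ) : EReal) = (Sr : EReal))
    (hmax : ∀ t : ℕ, ν t + ((δ₀ * t : ℝ) : EReal) = (Sr : EReal) → t ≤ sst)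
    (s u : ℕ) (hs : sst ≤ s) (hsu : s < u) {x : ℝ}
    (hx : (x, (u : ℝ)) ∈ posHullSet (Cl ν)) :
    lamN (posHullSet (Cl ν)) (s : ℤ) < ((x + δ₀ * u - δ₀ * s : ℝ) : EReal) := by
  obtain ⟨γ, hγ1, hγ2, hγ3⟩ := N_strict hν0 hδ₀ hSr hSb hmax
  have husst : (sst : ℝ) < (u : ℝ) := by exact_mod_cast lt_of_le_of_lt hs hsu
  have hxS : Sr < x + δ₀ * u := by
    have := hγ3 u x hx
    nlinarith
  have hssst : (sst : ℝ) ≤ (s : ℝ) := by exact_mod_cast hs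
  have hsur : (s : ℝ) < (u : ℝ) := by exact_mod_cast hsu
  set θ : ℝ := ((s : ℝ) - sst) / ((u : ℝ) - sst) with hθ
  have hθ0 : 0 ≤ θ := div_nonneg (by linarith) (by linarith)
  have hθ1 : θ < 1 := by
    rw [hθ, div_lt_one (by linarith)]; linarith
  have hne : (u : ℝ) - sst ≠ 0 := by linarith
  have hθs : (s : ℝ) = sst + θ * ((u : ℝ) - sst) := by
    rw [hθ, div_mul_cancel₀ _ hne]; ring
  have hpt : ((Sr - δ₀ * sst : ℝ), ((sst : ℕ) : ℝ)) ∈ posHullSet (Cl ν) :=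
    mem_N (ereal_add_coe_eq hSst).symm
  have hcombo := N_combo hpt hx (a := 1 - θ) (b := θ) (by linarith) hθ0 (by ring)
  simp only at hcombo
  have hc2 : (1 - θ) * ((sst : ℕ) : ℝ) + θ * (u : ℝ) = (s : ℝ) := by
    rw [hθs]; ring
  rw [hc2] at hcombo
  have hlam := lam_le hcombo
  refine lt_of_le_of_lt hlam ?_
  rw [EReal.coe_lt_coe_iff]
  nlinarith [mul_pos (by linarith : (0:ℝ) < 1 - θ) (by linarith : (0:ℝ) < x + δ₀ * u - Sr)]

lemma sig_eq (hδ₀ : 0 < δ₀)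
    (hSb : ∀ t : ℕ, (Sr : EReal) ≤ ν t + ((δ₀ * t : ℝ) : EReal))
    (hSst : ν sst + ((δ₀ * sst : ℝ) : EReal) = (Sr : EReal)) :
    sigN (posHullSet (Cl ν)) δ₀ = (Sr : EReal) := by
  apply le_antisymm
  · have hpt : ((Sr - δ₀ * sst : ℝ), ((sst : ℕ) : ℝ)) ∈ posHullSet (Cl ν) :=
      mem_N (ereal_add_coe_eq hSst).symm
    refine sInf_le ⟨((Sr - δ₀ * sst : ℝ), ((sst : ℕ) : ℝ)), hpt, ?_⟩
    have hr : (Sr - δ₀ * sst : ℝ) + δ₀ * ((sst : ℕ) : ℝ) = Sr := by ring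
    rw [EReal.coe_eq_coe_iff]
    exact hr.symm
  · apply le_sInf
    rintro v ⟨p, hp, rfl⟩
    have := N_bound hδ₀.le hSb _ hp
    exact_mod_cast this

lemma chi_eq (hν0 : ∀ s, 0 ≤ ν s) (hδ₀ : 0 < δ₀) (hSr : 0 ≤ Sr)
    (hSb : ∀ t : ℕ, (Sr : EReal) ≤ ν t + ((δ₀ * t : ℝ) : EReal))
    (hSst : ν sst + ((δ₀ * sst : ℝ) : EReal) = (Sr : EReal))
    (hmax : ∀ t : ℕ, ν t + ((δ₀ * t : ℝ) : EReal) = (Sr : EReal) → t ≤ sst) :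
    chiN (posHullSet (Cl ν)) δ₀ = sst := by
  obtain ⟨γ, hγ1, hγ2, hγ3⟩ := N_strict hν0 hδ₀ hSr hSb hmax
  rw [chiN, sig_eq hδ₀ hSb hSst]
  have hmem : sst ∈ {s : ℕ | lamN (posHullSet (Cl ν)) (s : ℤ) + ((δ₀ * s : ℝ) : EReal)
      = (Sr : EReal)} := by
    simp only [Set.mem_setOf_eq]
    rw [lam_sst_eq hδ₀ hSb hSst, ← EReal.coe_add, EReal.coe_eq_coe_iff]
    ring
  have hbd : ∀ s ∈ {s : ℕ | lamN (posHullSet (Cl ν)) (s : ℤ) + ((δ₀ * s : ℝ) : EReal)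
      = (Sr : EReal)}, s ≤ sst := by
    intro s hcs
    by_contra hgt
    push_neg at hgt
    have hlam_eq : lamN (posHullSet (Cl ν)) (s : ℤ) = ((Sr - δ₀ * s : ℝ) : EReal) :=
      ereal_add_coe_eq hcs
    have hge : ((Sr + γ * ((s:ℝ) - sst) - δ₀ * s : ℝ) : EReal) ≤
        lamN (posHullSet (Cl ν)) (s : ℤ) := by
      rw [le_lam_iff]
      intro x hx
      have := hγ3 s x hx
      exact_mod_cast (by linarith : Sr + γ * ((s:ℝ) - sst) - δ₀ * s ≤ x)
    rw [hlam_eq, EReal.coe_le_coe_iff] at hge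
    have hsst : (sst : ℝ) < (s : ℝ) := by exact_mod_cast hgt
    nlinarith
  exact le_antisymm (csSup_le ⟨sst, hmem⟩ hbd) (le_csSup ⟨sst, hbd⟩ hmem)

end crit2

section subg
variable {ν : ℕ → EReal} {δ₀ Sr : ℝ} {sst : ℕ}

lemma lam_real (hν0 : ∀ s, 0 ≤ ν s)
    (hSst : ν sst + ((δ₀ * sst : ℝ) : EReal) = (Sr : EReal))
    (t : ℕ) (ht : sst ≤ t) :
    lamN (posHullSet (Cl ν)) (t : ℤ) =
      (((lamN (posHullSet (Cl ν)) (t : ℤ)).toReal : ℝ) : EReal) :=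
  ereal_coe_toReal (lam_nonneg hν0 t) (lam_le_of_ge hSst t ht)

lemma subgrad (hν0 : ∀ s, 0 ≤ ν s) (hδ₀ : 0 < δ₀)
    (hSb : ∀ t : ℕ, (Sr : EReal) ≤ ν t + ((δ₀ * t : ℝ) : EReal))
    (hSst : ν sst + ((δ₀ * sst : ℝ) : EReal) = (Sr : EReal))
    (s : ℕ) (hs : sst ≤ s) :
    ∃ δ : ℝ, 0 ≤ δ ∧ δ ≤ δ₀ ∧
      ∀ t : ℕ, (((lamN (posHullSet (Cl ν)) (s : ℤ)).toReal + δ * (s : ℝ) - δ * (t : ℝ) : ℝ) :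
        EReal) ≤ lamN (posHullSet (Cl ν)) (t : ℤ) := by
  classical
  set L : ℕ → ℝ := fun t => (lamN (posHullSet (Cl ν)) (t : ℤ)).toReal with hLdef
  have gmr : ∀ a u : ℕ, sst ≤ a → a ≤ u → L a ≤ L u + δ₀ * u - δ₀ * a := by
    intro a u ha hau
    by_contra hcon
    push_neg at hcon
    set ε : ℝ := (L a - (L u + δ₀ * u - δ₀ * a)) / 2 with hε
    have hεpos : 0 < ε := by rw [hε]; linarith
    have hlt : lamN (posHullSet (Cl ν)) (u : ℤ) < ((L u + ε : ℝ) : EReal) := by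
      rw [lam_real hν0 hSst u (le_trans ha hau)]
      exact_mod_cast (by linarith : L u < L u + ε)
    obtain ⟨x, hx, hxlt⟩ := lam_lt hlt
    have h1 := gmono_pt hδ₀ hSb hSst a u ha hau hx
    rw [lam_real hν0 hSst a ha] at h1
    have h2 : L a ≤ x + δ₀ * u - δ₀ * a := by exact_mod_cast h1
    have h3 : x < L u + ε := by exact_mod_cast hxlt
    rw [hε] at h3
    linarith
  have c3 : ∀ (t u : ℕ), t < s → s < u → ∀ Lt : ℝ,
      lamN (posHullSet (Cl ν)) (t : ℤ) = (Lt : EReal) →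
      (L s - L u) / ((u : ℝ) - s) ≤ (Lt - L s) / ((s : ℝ) - t) := by
    intro t u hts hsu Lt hLt
    have htr : (t : ℝ) < s := by exact_mod_cast hts
    have hur : (s : ℝ) < u := by exact_mod_cast hsu
    have hut : (t : ℝ) < u := by linarith
    set a : ℝ := ((u : ℝ) - s) / ((u : ℝ) - t) with ha_def
    set b : ℝ := ((s : ℝ) - t) / ((u : ℝ) - t) with hb_def
    have ha : 0 ≤ a := div_nonneg (by linarith) (by linarith)
    have hb : 0 ≤ b := div_nonneg (by linarith) (by linarith)
    have hab : a + b = 1 := by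
      rw [ha_def, hb_def, ← add_div]
      have : (u : ℝ) - s + ((s : ℝ) - t) = (u : ℝ) - t := by ring
      rw [this, div_self (by linarith : (u : ℝ) - t ≠ 0)]
    have key : ∀ ε : ℝ, 0 < ε → L s ≤ a * Lt + b * L u + ε := by
      intro ε hεpos
      have hlt1 : lamN (posHullSet (Cl ν)) (t : ℤ) < ((Lt + ε / 2 : ℝ) : EReal) := by
        rw [hLt]; exact_mod_cast (by linarith : Lt < Lt + ε / 2)
      have hlt2 : lamN (posHullSet (Cl ν)) (u : ℤ) < ((L u + ε / 2 : ℝ) : EReal) := by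
        rw [lam_real hν0 hSst u (by omega)]
        exact_mod_cast (by linarith : L u < L u + ε / 2)
      obtain ⟨x₁, hx₁, hx₁lt⟩ := lam_lt hlt1
      obtain ⟨x₂, hx₂, hx₂lt⟩ := lam_lt hlt2
      have hcombo := N_combo hx₁ hx₂ ha hb hab
      simp only at hcombo
      have hne : (u : ℝ) - t ≠ 0 := ne_of_gt (by linarith)
      have hc2 : a * (t : ℝ) + b * (u : ℝ) = (s : ℝ) := by
        rw [ha_def, hb_def, div_mul_eq_mul_div, div_mul_eq_mul_div, ← add_div,
          show ((u:ℝ) - s) * t + ((s:ℝ) - t) * u = (s:ℝ) * ((u:ℝ) - t) by ring]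
        exact mul_div_cancel_right₀ _ hne
      rw [hc2] at hcombo
      have hlam := lam_le hcombo
      rw [lam_real hν0 hSst s hs] at hlam
      have h2 : L s ≤ a * x₁ + b * x₂ := by exact_mod_cast hlam
      have hx₁' : x₁ < Lt + ε / 2 := by exact_mod_cast hx₁lt
      have hx₂' : x₂ < L u + ε / 2 := by exact_mod_cast hx₂lt
      nlinarith [mul_le_mul_of_nonneg_left hx₁'.le ha, mul_le_mul_of_nonneg_left hx₂'.le hb]
    have keyd : L s ≤ a * Lt + b * L u := by
      by_contra hc
      push_neg at hc
      have := key ((L s - (a * Lt + b * L u)) / 2) (by linarith)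
      linarith
    rw [div_le_div_iff₀ (by linarith) (by linarith)]
    have hexp : L s * ((u : ℝ) - t) ≤ ((u : ℝ) - s) * Lt + ((s : ℝ) - t) * L u := by
      have h4 := mul_le_mul_of_nonneg_right keyd
        (by linarith : (0 : ℝ) ≤ (u : ℝ) - t)
      calc L s * ((u : ℝ) - t) ≤ (a * Lt + b * L u) * ((u : ℝ) - t) := h4
        _ = ((u : ℝ) - s) * Lt + ((s : ℝ) - t) * L u := by
            have hne : (u : ℝ) - t ≠ 0 := ne_of_gt (by linarith)
            rw [ha_def, hb_def, div_mul_eq_mul_div, div_mul_eq_mul_div, ← add_div,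
              div_mul_eq_mul_div,
              show (((u:ℝ) - s) * Lt + ((s:ℝ) - t) * L u) * ((u:ℝ) - t) =
                (((u:ℝ) - s) * Lt + ((s:ℝ) - t) * L u) * ((u:ℝ) - t) by ring]
            exact mul_div_cancel_right₀ _ hne
    nlinarith [hexp]
  set A : Set ℝ := {q | ∃ u : ℕ, s < u ∧ q = (L s - L u) / ((u : ℝ) - s)} with hA
  have hAne : A.Nonempty := ⟨(L s - L (s + 1)) / (((s + 1 : ℕ) : ℝ) - s), s + 1, lt_add_one s, rfl⟩
  have hAbd : ∀ q ∈ A, q ≤ δ₀ := by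
    rintro q ⟨u, hu, rfl⟩
    have hur : (s : ℝ) < u := by exact_mod_cast hu
    rw [div_le_iff₀ (by linarith)]
    have := gmr s u hs hu.le
    nlinarith
  set δ : ℝ := max 0 (sSup A) with hδdef
  have hδ0 : 0 ≤ δ := le_max_left _ _
  have hδle : δ ≤ δ₀ := max_le hδ₀.le (csSup_le hAne hAbd)
  refine ⟨δ, hδ0, hδle, ?_⟩
  intro t
  rcases lt_trichotomy t s with htlt | heq | htgt
  · rcases eq_or_ne (lamN (posHullSet (Cl ν)) (t : ℤ)) ⊤ with htop | htop
    · rw [htop]; exact le_top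
    · have hbot : lamN (posHullSet (Cl ν)) (t : ℤ) ≠ ⊥ :=
        (lt_of_lt_of_le (EReal.coe_zero ▸ EReal.bot_lt_coe 0) (lam_nonneg hν0 t)).ne'
      set Lt : ℝ := (lamN (posHullSet (Cl ν)) (t : ℤ)).toReal with hLtdef
      have hLt : lamN (posHullSet (Cl ν)) (t : ℤ) = (Lt : EReal) :=
        (EReal.coe_toReal htop hbot).symm
      have hmono := lam_mono (ν := ν) t s htlt.le
      have hLsLt : L s ≤ Lt := by
        rw [lam_real hν0 hSst s hs, hLt] at hmono
        exact_mod_cast hmono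
      have htr : (t : ℝ) < s := by exact_mod_cast htlt
      have hδslope : δ ≤ (Lt - L s) / ((s : ℝ) - t) := by
        apply max_le
        · exact div_nonneg (by linarith) (by linarith)
        · apply csSup_le hAne
          rintro q ⟨u, hu, rfl⟩
          exact c3 t u htlt hu Lt hLt
      rw [hLt]
      have hfin : L s + δ * (s : ℝ) - δ * (t : ℝ) ≤ Lt := by
        rw [le_div_iff₀ (by linarith)] at hδslope
        nlinarith
      exact_mod_cast hfin
  · rw [heq, lam_real hν0 hSst s hs]
    exact_mod_cast (by linarith : L s + δ * (s : ℝ) - δ * (s : ℝ) ≤ L s)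
  · have hslope : (L s - L t) / ((t : ℝ) - s) ≤ δ :=
      le_trans (le_csSup ⟨δ₀, fun q hq => hAbd q hq⟩ ⟨t, htgt, rfl⟩) (le_max_right _ _)
    have htr : (s : ℝ) < t := by exact_mod_cast htgt
    rw [lam_real hν0 hSst t (le_trans hs htgt.le)]
    have hfin : L s + δ * (s : ℝ) - δ * (t : ℝ) ≤ L t := by
      rw [div_le_iff₀ (by linarith)] at hslope
      nlinarith
    exact_mod_cast hfin

end subg

section argmax

lemma le_add_ValP {σ : Type} {W : σ → ℝ} {c : EReal} {a : ℝ} {P : (σ →₀ ℕ) → Prop}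
    (h : ∀ e, P e → c ≤ ((a + wtG W e : ℝ) : EReal)) : c ≤ (a : EReal) + ValP W P := by
  by_cases hP : ∃ e, P e
  · induction c using EReal.rec with
    | bot => exact bot_le
    | coe x =>
      have h1 : ((x - a : ℝ) : EReal) ≤ ValP W P := by
        rw [le_ValP_iff]
        intro e he
        have h2 : (x : ℝ) ≤ a + wtG W e := by exact_mod_cast h e he
        exact_mod_cast (by linarith : x - a ≤ wtG W e)
      calc ((x : ℝ) : EReal) = (a : EReal) + ((x - a : ℝ) : EReal) := by
            rw [← EReal.coe_add]; norm_num
        _ ≤ _ := add_le_add_right h1 _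
    | top =>
      obtain ⟨e, he⟩ := hP
      have := (h e he).trans_lt (EReal.coe_lt_top _)
      exact absurd this (lt_irrefl ⊤)
  · have hempty : ValP W P = (⊤ : EReal) := by
      rw [ValP]
      have : {v : EReal | ∃ e, P e ∧ v = ((wtG W e : ℝ) : EReal)} = ∅ :=
        Set.eq_empty_iff_forall_notMem.2 (by rintro v ⟨e, hPe, _⟩; exact hP ⟨e, hPe⟩)
      rw [this, sInf_empty]
    rw [hempty, EReal.coe_add_top]
    exact le_top

lemma argmax_exists {ν : ℕ → EReal} (hν0 : ∀ s, 0 ≤ ν s) {δ : ℝ} (hδ : 0 < δ)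
    (hlt : (⨅ s : ℕ, (((s : ℝ) * δ : ℝ) : EReal) + ν s) < ⊤) :
    ∃ sm : ℕ, (((sm : ℝ) * δ : ℝ) : EReal) + ν sm =
        (⨅ s : ℕ, (((s : ℝ) * δ : ℝ) : EReal) + ν s) ∧
      ∀ t : ℕ, (((t : ℝ) * δ : ℝ) : EReal) + ν t =
          (⨅ s : ℕ, (((s : ℝ) * δ : ℝ) : EReal) + ν s) → t ≤ sm := by
  classical
  set F : ℕ → EReal := fun s => (((s : ℝ) * δ : ℝ) : EReal) + ν s with hF
  set S : EReal := ⨅ s : ℕ, F s with hS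
  have hF0 : ∀ s : ℕ, (((s : ℝ) * δ : ℝ) : EReal) ≤ F s := by
    intro s
    have := add_le_add_right (hν0 s) ((((s : ℝ) * δ : ℝ) : EReal))
    rwa [add_zero] at this
  have hS0 : 0 ≤ S := le_iInf fun s => le_trans (by exact_mod_cast mul_nonneg (Nat.cast_nonneg s) hδ.le) (hF0 s)
  have hSreal : S = ((S.toReal : ℝ) : EReal) :=
    (EReal.coe_toReal hlt.ne
      ((lt_of_lt_of_le (EReal.coe_zero ▸ EReal.bot_lt_coe 0) hS0).ne')).symm
  set Sr : ℝ := S.toReal with hSr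
  have hattain : ∃ sm, F sm = S := by
    by_contra hno
    push_neg at hno
    have hstrict : ∀ s, S < F s := fun s => lt_of_le_of_ne (iInf_le F s) (Ne.symm (hno s))
    set M : ℕ := ⌈(Sr + 1) / δ⌉₊ with hM
    have hrange : (Finset.range (M + 1)).Nonempty := ⟨0, by simp⟩
    obtain ⟨t₁, _, ht₁⟩ := Finset.exists_mem_eq_inf' hrange F
    have hm1 : S < (Finset.range (M + 1)).inf' hrange F := ht₁ ▸ hstrict t₁
    have hb : ∀ s : ℕ, min ((Finset.range (M + 1)).inf' hrange F) ((Sr + 1 : ℝ) : EReal) ≤ F s := by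
      intro s
      rcases lt_or_ge s (M + 1) with hc | hc
      · exact le_trans (min_le_left _ _) (Finset.inf'_le F (Finset.mem_range.mpr hc))
      · refine le_trans (min_le_right _ _) (le_trans ?_ (hF0 s))
        have h2 : (Sr + 1) / δ ≤ (M : ℝ) := Nat.le_ceil _
        have h3 : (M : ℝ) ≤ (s : ℝ) := by exact_mod_cast (by omega : M ≤ s)
        rw [div_le_iff₀ hδ] at h2
        exact_mod_cast (by nlinarith : Sr + 1 ≤ (s : ℝ) * δ)
    have hfin : S < S := by
      refine lt_of_lt_of_le (lt_min hm1 ?_) (le_iInf hb)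
      rw [hSreal]
      exact_mod_cast lt_add_one Sr
    exact absurd hfin (lt_irrefl S)
  obtain ⟨s₀, hs₀⟩ := hattain
  have hbdd : ∀ t, F t = S → t ≤ ⌈Sr / δ⌉₊ := by
    intro t ht
    have h1 : (((t : ℝ) * δ : ℝ) : EReal) ≤ S := ht ▸ hF0 t
    rw [hSreal] at h1
    have h2 : (t : ℝ) * δ ≤ Sr := by exact_mod_cast h1
    have h3 : (t : ℝ) ≤ Sr / δ := by rw [le_div_iff₀ hδ]; linarith
    exact_mod_cast h3.trans (Nat.le_ceil _)
  have hAne : Set.Nonempty {t : ℕ | F t = S} := ⟨s₀, hs₀⟩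
  have hAbdd : BddAbove {t : ℕ | F t = S} := ⟨⌈Sr / δ⌉₊, fun t ht => hbdd t ht⟩
  exact ⟨sSup {t : ℕ | F t = S}, Nat.sSup_mem hAne hAbdd, fun t ht => le_csSup hAbdd ht⟩

end argmax

end S13

/-- invariance of the critical values `ς_δ` (`δ ≤ δ₀`), of the critical
height, of the abscissas above it, and of the reduced vectors of the levels above the
critical height, under the coordinate change `z' = z + f` with `ν_A(f) ≥ δ₀`. -/
theorem statement13 {k : Type} [Field k] [CharZero k] {r l : ℕ} (hr : 0 < r)
    (w : Fin r → ℝ) (hw : ∀ i, 0 < w i) (hind : LinearIndependent ℚ w)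
    (eta eta' : ℕ → Idx r l → MvPowerSeries (Idx r l) k)
    (h h' : ℕ → MvPowerSeries (Idx r l) k) (hh0 : h 0 = 0)
    (hω : ∃ s, (∃ b, eta s b ≠ 0) ∨ h s ≠ 0)
    (f : MvPowerSeries (Idx r l) k) (δ₀ : ℝ) (hδ₀ : 0 < δ₀)
    (hf : (δ₀ : EReal) ≤ nuG (Sum.elim w fun _ => (0:ℝ)) f)
    (heta' : ∀ (s : ℕ) (b : Idx r l) (e : Idx r l →₀ ℕ),
      MvPowerSeries.coeff e (eta' s b) =
        (finsum fun t : ℕ => if s ≤ t then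
            (Nat.choose t s : k) * MvPowerSeries.coeff e ((-f) ^ (t - s) * eta t b)
          else 0)
        - (finsum fun t : ℕ => if s + 1 ≤ t then
            (Nat.choose (t - 1) s : k) *
              MvPowerSeries.coeff e
                ((-f) ^ (t - s - 1) * (h t * DopG (fun u => u.isLeft) b f))
          else 0))
    (hh' : ∀ (s : ℕ) (e : Idx r l →₀ ℕ),
      MvPowerSeries.coeff e (h' s) =
        finsum fun t : ℕ => if 1 ≤ s ∧ s ≤ t then
            (Nat.choose (t - 1) (s - 1) : k) *
              MvPowerSeries.coeff e ((-f) ^ (t - s) * h t)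
          else 0) :
    (∀ δ : ℝ, 0 < δ → δ ≤ δ₀ →
      (⨅ s : ℕ, (((s * δ : ℝ)) : EReal) +
          min (nu1G (Sum.elim w fun _ => (0:ℝ)) (eta s))
            (nuG (Sum.elim w fun _ => (0:ℝ)) (h s))) =
      (⨅ s : ℕ, (((s * δ : ℝ)) : EReal) +
          min (nu1G (Sum.elim w fun _ => (0:ℝ)) (eta' s))
            (nuG (Sum.elim w fun _ => (0:ℝ)) (h' s)))) ∧
    (chiN (NPLev w eta h) δ₀ = chiN (NPLev w eta' h') δ₀ ∧
      ∀ s : ℕ, chiN (NPLev w eta h) δ₀ ≤ s →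
        lamN (NPLev w eta h) (s : ℤ) = lamN (NPLev w eta' h') (s : ℤ)) ∧
    (∀ s : ℕ, chiN (NPLev w eta h) δ₀ ≤ s →
      ∀ e : Idx r l →₀ ℕ, (∀ j : Fin l, e (Sum.inr j) = 0) →
        ((wtG (Sum.elim w fun _ => (0:ℝ)) e : ℝ) : EReal) = lamN (NPLev w eta h) (s : ℤ) →
        (∀ i : Fin r,
          MvPowerSeries.coeff e (eta s (Sum.inl i)) =
            MvPowerSeries.coeff e (eta' s (Sum.inl i))) ∧
        MvPowerSeries.coeff e (h s) = MvPowerSeries.coeff e (h' s)) := by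
  classical
  set W : Idx r l → ℝ := Sum.elim w fun _ => (0:ℝ) with hW
  have hWy : ∀ j : Fin l, W (Sum.inr j) = 0 := fun j => rfl
  have hW0 : ∀ b, 0 ≤ W b := by rintro (i | j); exacts [(hw i).le, le_rfl]
  have hfw : ∀ e, MvPowerSeries.coeff e f ≠ 0 → δ₀ ≤ wtG W e := by
    intro e he
    exact_mod_cast le_trans hf (S13.nuG_le he)
  set ν : ℕ → EReal := S13.ValF W eta h with hν
  set ν' : ℕ → EReal := S13.ValF W eta' h' with hν'
  have hminEq : ∀ s, min (nu1G W (eta s)) (nuG W (h s)) = ν s := fun s => S13.minEq s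
  have hminEq' : ∀ s, min (nu1G W (eta' s)) (nuG W (h' s)) = ν' s := fun s => S13.minEq s
  have hν0 : ∀ s, 0 ≤ ν s := fun s => S13.ValP_nonneg hW0 _
  have hν'0 : ∀ s, 0 ≤ ν' s := fun s => S13.ValP_nonneg hW0 _
  have hattain_gen : ∀ P : (Idx r l →₀ ℕ) → Prop, S13.ValP W P ≠ ⊤ →
      ∃ e, P e ∧ ((wtG W e : ℝ) : EReal) = S13.ValP W P := by
    intro P hP
    refine S13.ValP_attained (S13.wfin w hw) ?_
    by_contra hne
    push_neg at hne
    apply hP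
    rw [S13.ValP]
    have hem : {v : EReal | ∃ e, P e ∧ v = ((wtG W e : ℝ) : EReal)} = ∅ :=
      Set.eq_empty_iff_forall_notMem.2 (by rintro v ⟨e2, hPe, _⟩; exact hne e2 hPe)
    rw [hem, sInf_empty]
  have hattainν : ∀ u, ν u ≠ ⊤ →
      ∃ e, S13.MonF (k := k) eta h u e ∧ ((wtG W e : ℝ) : EReal) = ν u :=
    fun u hu => hattain_gen _ hu
  have hattainν' : ∀ u, ν' u ≠ ⊤ →
      ∃ e, S13.MonF (k := k) eta' h' u e ∧ ((wtG W e : ℝ) : EReal) = ν' u :=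
    fun u hu => hattain_gen _ hu
  have hbound' : ∀ (s : ℕ) (e : Idx r l →₀ ℕ), S13.MonF (k := k) eta' h' s e → ∃ t, s ≤ t ∧
      ∃ e₂, S13.MonF (k := k) eta h t e₂ ∧ ((t : ℝ) - s) * δ₀ + wtG W e₂ ≤ wtG W e := by
    rintro s e (⟨b, hb⟩ | hb)
    · exact S13.bound_eta' hWy hfw heta' s b e hb
    · exact S13.bound_h' hfw hh' s e hb
  have heqc : ∀ (s : ℕ) (e : Idx r l →₀ ℕ), (∀ t : ℕ, s + 1 ≤ t → ∀ e₂, S13.MonF (k := k) eta h t e₂ →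
      wtG W e < ((t : ℝ) - s) * δ₀ + wtG W e₂) →
      (∀ b, MvPowerSeries.coeff e (eta' s b) = MvPowerSeries.coeff e (eta s b)) ∧
      MvPowerSeries.coeff e (h' s) = MvPowerSeries.coeff e (h s) :=
    fun s e H => ⟨fun b => S13.coeff_eta'_eq hWy hfw heta' s b e H,
      S13.coeff_h'_eq hfw hh0 hh' s e H⟩
  have hdiff : ∀ (s : ℕ) (e : Idx r l →₀ ℕ),
      ((∃ b, MvPowerSeries.coeff e (eta' s b) ≠ MvPowerSeries.coeff e (eta s b)) ∨
        MvPowerSeries.coeff e (h' s) ≠ MvPowerSeries.coeff e (h s)) →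
      ∃ t, s + 1 ≤ t ∧ ∃ e₂, S13.MonF (k := k) eta h t e₂ ∧
        ((t : ℝ) - s) * δ₀ + wtG W e₂ ≤ wtG W e := by
    intro s e hne
    by_contra hcon
    push_neg at hcon
    obtain ⟨h1, h2⟩ := heqc s e hcon
    rcases hne with ⟨b, hb⟩ | hb
    · exact hb (h1 b)
    · exact hb h2
  have hSlt : ∀ δ : ℝ, 0 < δ → (⨅ s : ℕ, (((s : ℝ) * δ : ℝ) : EReal) + ν s) < ⊤ := by
    intro δ hδp
    obtain ⟨s₀, hs₀⟩ := hω
    have hex : ∃ e, S13.MonF (k := k) eta h s₀ e := by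
      rcases hs₀ with ⟨b, hb⟩ | hb
      · by_contra hc
        push_neg at hc
        apply hb
        ext e'
        have := hc e'
        simp only [S13.MonF, not_or, not_exists, not_not] at this
        simpa using this.1 b
      · by_contra hc
        push_neg at hc
        apply hb
        ext e'
        have := hc e'
        simp only [S13.MonF, not_or, not_exists, not_not] at this
        simpa using this.2
    obtain ⟨e₀, hM₀⟩ := hex
    calc (⨅ s : ℕ, (((s : ℝ) * δ : ℝ) : EReal) + ν s) ≤
        (((s₀ : ℝ) * δ : ℝ) : EReal) + ν s₀ := iInf_le _ s₀
      _ ≤ (((s₀ : ℝ) * δ : ℝ) : EReal) + ((wtG W e₀ : ℝ) : EReal) :=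
          add_le_add_right (S13.ValP_le hM₀) _
      _ = (((s₀ : ℝ) * δ + wtG W e₀ : ℝ) : EReal) := by rw [← EReal.coe_add]
      _ < ⊤ := EReal.coe_lt_top _
  have hgeS : ∀ δ : ℝ, 0 < δ → δ ≤ δ₀ →
      (⨅ s : ℕ, (((s : ℝ) * δ : ℝ) : EReal) + ν s) ≤
        (⨅ s : ℕ, (((s : ℝ) * δ : ℝ) : EReal) + ν' s) := by
    intro δ hδp hδle
    refine le_iInf fun s => ?_
    refine S13.le_add_ValP fun e he => ?_
    obtain ⟨t, hts, e₂, hM₂, hb⟩ := hbound' s e he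
    have hts' : (s : ℝ) ≤ t := by exact_mod_cast hts
    calc (⨅ u : ℕ, (((u : ℝ) * δ : ℝ) : EReal) + ν u) ≤
        (((t : ℝ) * δ : ℝ) : EReal) + ν t := iInf_le _ t
      _ ≤ (((t : ℝ) * δ : ℝ) : EReal) + ((wtG W e₂ : ℝ) : EReal) :=
          add_le_add_right (S13.ValP_le hM₂) _
      _ = (((t : ℝ) * δ + wtG W e₂ : ℝ) : EReal) := by rw [← EReal.coe_add]
      _ ≤ (((s : ℝ) * δ + wtG W e : ℝ) : EReal) := by
          refine EReal.coe_le_coe_iff.mpr ?_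
          nlinarith [mul_nonneg (sub_nonneg.2 hts') (sub_nonneg.2 hδle)]
  have hmain : ∀ δ : ℝ, 0 < δ → δ ≤ δ₀ → ∀ sm : ℕ,
      ((((sm : ℝ) * δ : ℝ) : EReal) + ν sm = (⨅ s : ℕ, (((s : ℝ) * δ : ℝ) : EReal) + ν s)) →
      (∀ t : ℕ, (((t : ℝ) * δ : ℝ) : EReal) + ν t =
        (⨅ s : ℕ, (((s : ℝ) * δ : ℝ) : EReal) + ν s) → t ≤ sm) →
      ν' sm = ν sm := by
    intro δ hδp hδle sm hsm hsmmax
    have hνsm_ne : ν sm ≠ ⊤ := by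
      intro hc
      have hS := hSlt δ hδp
      rw [hc, EReal.coe_add_top] at hsm
      rw [← hsm] at hS
      exact lt_irrefl _ hS
    obtain ⟨e₀, hM₀, hwt₀⟩ := hattainν sm hνsm_ne
    have hstrict : ∀ t, sm + 1 ≤ t → ∀ e₂, S13.MonF (k := k) eta h t e₂ →
        wtG W e₀ < ((t : ℝ) - sm) * δ₀ + wtG W e₂ := by
      intro t ht e₂ hM₂
      have hFt : (⨅ u : ℕ, (((u : ℝ) * δ : ℝ) : EReal) + ν u) <
          (((t : ℝ) * δ : ℝ) : EReal) + ν t :=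
        lt_of_le_of_ne (iInf_le _ t) (fun hc => by have := hsmmax t hc.symm; omega)
      have h2 : (((t : ℝ) * δ : ℝ) : EReal) + ν t ≤
          (((t : ℝ) * δ + wtG W e₂ : ℝ) : EReal) := by
        rw [EReal.coe_add]
        exact add_le_add_right (S13.ValP_le hM₂) _
      have h3 : ((((sm : ℝ)) * δ + wtG W e₀ : ℝ) : EReal) <
          (((t : ℝ) * δ + wtG W e₂ : ℝ) : EReal) := by
        have heqS : ((((sm : ℝ)) * δ + wtG W e₀ : ℝ) : EReal) =
            (⨅ u : ℕ, (((u : ℝ) * δ : ℝ) : EReal) + ν u) := by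
          rw [← hsm, ← hwt₀, ← EReal.coe_add]
        rw [heqS]
        exact lt_of_lt_of_le hFt h2
      have h4 : (sm : ℝ) * δ + wtG W e₀ < (t : ℝ) * δ + wtG W e₂ := by exact_mod_cast h3
      have htr : (sm : ℝ) + 1 ≤ t := by exact_mod_cast ht
      nlinarith [mul_nonneg (by linarith : (0:ℝ) ≤ (t : ℝ) - sm)
        (by linarith : (0:ℝ) ≤ δ₀ - δ)]
    have heq := heqc sm e₀ hstrict
    have hle1 : ν' sm ≤ ν sm := by
      rw [← hwt₀]
      apply S13.ValP_le
      rcases hM₀ with ⟨b, hb⟩ | hb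
      · exact Or.inl ⟨b, by rw [heq.1 b]; exact hb⟩
      · exact Or.inr (by rw [heq.2]; exact hb)
    have hge1 : ν sm ≤ ν' sm := by
      rw [hν']
      rw [show S13.ValF W eta' h' sm = S13.ValP W (S13.MonF (k := k) eta' h' sm) from rfl,
        S13.le_ValP_iff]
      intro e he
      obtain ⟨t, hts, e₂, hM₂, hb⟩ := hbound' sm e he
      rcases eq_or_lt_of_le hts with rfl | hlt
      · calc ν sm ≤ ((wtG W e₂ : ℝ) : EReal) := S13.ValP_le hM₂
          _ ≤ ((wtG W e : ℝ) : EReal) := by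
            refine EReal.coe_le_coe_iff.mpr ?_
            have : ((sm : ℝ) - sm) * δ₀ + wtG W e₂ ≤ wtG W e := hb
            linarith [this]
      · have hst := hstrict t hlt e₂ hM₂
        rw [← hwt₀]
        refine EReal.coe_le_coe_iff.mpr ?_
        linarith
    exact le_antisymm hle1 hge1
  have part1 : ∀ δ : ℝ, 0 < δ → δ ≤ δ₀ →
      (⨅ s : ℕ, (((s : ℝ) * δ : ℝ) : EReal) + ν s) =
        (⨅ s : ℕ, (((s : ℝ) * δ : ℝ) : EReal) + ν' s) := by
    intro δ hδp hδle
    obtain ⟨sm, hsm, hsmmax⟩ := S13.argmax_exists hν0 hδp (hSlt δ hδp)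
    refine le_antisymm (hgeS δ hδp hδle) ?_
    calc (⨅ s : ℕ, (((s : ℝ) * δ : ℝ) : EReal) + ν' s) ≤
        (((sm : ℝ) * δ : ℝ) : EReal) + ν' sm := iInf_le _ sm
      _ = (((sm : ℝ) * δ : ℝ) : EReal) + ν sm := by rw [hmain δ hδp hδle sm hsm hsmmax]
      _ = _ := hsm
  -- δ₀-specific data
  obtain ⟨sm, hsm, hsmmax⟩ := S13.argmax_exists hν0 hδ₀ (hSlt δ₀ hδ₀)
  have hS0 : (0 : EReal) ≤ (⨅ s : ℕ, (((s : ℝ) * δ₀ : ℝ) : EReal) + ν s) :=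
    le_iInf fun s => add_nonneg
      (by exact_mod_cast mul_nonneg (Nat.cast_nonneg s) hδ₀.le) (hν0 s)
  set Sr : ℝ := (⨅ s : ℕ, (((s : ℝ) * δ₀ : ℝ) : EReal) + ν s).toReal with hSrdef
  have hSreal : (⨅ s : ℕ, (((s : ℝ) * δ₀ : ℝ) : EReal) + ν s) = (Sr : EReal) :=
    (EReal.coe_toReal (hSlt δ₀ hδ₀).ne
      ((lt_of_lt_of_le (EReal.coe_zero ▸ EReal.bot_lt_coe 0) hS0).ne')).symm
  have hSr0 : (0 : ℝ) ≤ Sr := by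
    rw [hSreal] at hS0
    exact_mod_cast hS0
  have hSb : ∀ t : ℕ, (Sr : EReal) ≤ ν t + ((δ₀ * (t : ℝ) : ℝ) : EReal) := by
    intro t
    have h1 : (Sr : EReal) ≤ (((t : ℝ) * δ₀ : ℝ) : EReal) + ν t := by
      rw [← hSreal]; exact iInf_le _ t
    rw [mul_comm (t : ℝ) δ₀, add_comm] at h1
    exact h1
  have hSst : ν sm + ((δ₀ * (sm : ℝ) : ℝ) : EReal) = (Sr : EReal) := by
    rw [hSreal] at hsm
    rw [← hsm, mul_comm (sm : ℝ) δ₀, add_comm]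
  have hmaxcrit : ∀ t : ℕ, ν t + ((δ₀ * (t : ℝ) : ℝ) : EReal) = (Sr : EReal) → t ≤ sm := by
    intro t ht
    apply hsmmax
    rw [hSreal, mul_comm (t : ℝ) δ₀, add_comm]
    exact ht
  have hν'sm : ν' sm = ν sm := hmain δ₀ hδ₀ le_rfl sm hsm hsmmax
  have hSst' : ν' sm + ((δ₀ * (sm : ℝ) : ℝ) : EReal) = (Sr : EReal) := by
    rw [hν'sm]; exact hSst
  have hS'eq : (⨅ s : ℕ, (((s : ℝ) * δ₀ : ℝ) : EReal) + ν' s) = (Sr : EReal) := by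
    rw [← part1 δ₀ hδ₀ le_rfl]; exact hSreal
  have hSb' : ∀ t : ℕ, (Sr : EReal) ≤ ν' t + ((δ₀ * (t : ℝ) : ℝ) : EReal) := by
    intro t
    have h1 : (Sr : EReal) ≤ (((t : ℝ) * δ₀ : ℝ) : EReal) + ν' t := by
      rw [← hS'eq]; exact iInf_le _ t
    rw [mul_comm (t : ℝ) δ₀, add_comm] at h1
    exact h1
  have hmax' : ∀ t : ℕ, ν' t + ((δ₀ * (t : ℝ) : ℝ) : EReal) = (Sr : EReal) → t ≤ sm := by
    intro t ht
    by_contra hgt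
    push_neg at hgt
    have hν't : ν' t = ((Sr - δ₀ * (t : ℝ) : ℝ) : EReal) := S13.ereal_add_coe_eq ht
    obtain ⟨e, hMe, hwte⟩ := hattainν' t (by rw [hν't]; exact EReal.coe_ne_top _)
    obtain ⟨u, htu, e₂, hM₂, hb⟩ := hbound' t e hMe
    have hFu : (Sr : EReal) < (((u : ℝ) * δ₀ : ℝ) : EReal) + ν u := by
      rw [← hSreal]
      exact lt_of_le_of_ne (iInf_le _ u)
        (fun hc => by have := hsmmax u hc.symm; omega)
    have h2 : (((u : ℝ) * δ₀ : ℝ) : EReal) + ν u ≤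
        (((u : ℝ) * δ₀ + wtG W e₂ : ℝ) : EReal) := by
      rw [EReal.coe_add]
      exact add_le_add_right (S13.ValP_le hM₂) _
    have hwtr : wtG W e = Sr - δ₀ * (t : ℝ) := by
      have := hwte
      rw [hν't] at this
      exact_mod_cast this
    have hut : (t : ℝ) ≤ (u : ℝ) := by exact_mod_cast htu
    have h3 : (u : ℝ) * δ₀ + wtG W e₂ ≤ Sr := by
      have hb2 : ((u : ℝ) - t) * δ₀ + wtG W e₂ ≤ wtG W e := hb
      rw [hwtr] at hb2
      nlinarith
    have := lt_of_lt_of_le hFu (le_trans h2 (EReal.coe_le_coe_iff.mpr h3))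
    exact lt_irrefl _ this
  have hνlam : ∀ t : ℕ, lamN (posHullSet (S13.Cl ν)) (t : ℤ) ≤ ν t := by
    intro t
    rcases eq_or_ne (ν t) ⊤ with htop | htop
    · rw [htop]; exact le_top
    · have hνreal : ν t = (((ν t).toReal : ℝ) : EReal) :=
        (EReal.coe_toReal htop
          ((lt_of_lt_of_le (EReal.coe_zero ▸ EReal.bot_lt_coe 0) (hν0 t)).ne')).symm
      rw [hνreal]
      exact S13.lam_le (S13.mem_N hνreal.symm)
  have hν'lam : ∀ t : ℕ, lamN (posHullSet (S13.Cl ν')) (t : ℤ) ≤ ν' t := by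
    intro t
    rcases eq_or_ne (ν' t) ⊤ with htop | htop
    · rw [htop]; exact le_top
    · have hνreal : ν' t = (((ν' t).toReal : ℝ) : EReal) :=
        (EReal.coe_toReal htop
          ((lt_of_lt_of_le (EReal.coe_zero ▸ EReal.bot_lt_coe 0) (hν'0 t)).ne')).symm
      rw [hνreal]
      exact S13.lam_le (S13.mem_N hνreal.symm)
  -- direction A : lam ν ≤ lam ν' above the critical height
  have hlamA : ∀ s : ℕ, sm ≤ s →
      lamN (posHullSet (S13.Cl ν)) (s : ℤ) ≤ lamN (posHullSet (S13.Cl ν')) (s : ℤ) := by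
    intro s hs
    obtain ⟨δa, hδa0, hδale, hδasub⟩ := S13.subgrad hν0 hδ₀ hSb hSst s hs
    set Ls : ℝ := (lamN (posHullSet (S13.Cl ν)) (s : ℤ)).toReal with hLs
    have hboundA : ∀ u : ℕ, ((Ls + δa * (s : ℝ) : ℝ) : EReal) ≤
        ν' u + ((δa * (u : ℝ) : ℝ) : EReal) := by
      intro u
      rcases eq_or_ne (ν' u) ⊤ with htop | htop
      · rw [htop, EReal.top_add_coe]; exact le_top
      · obtain ⟨e, hMe, hwte⟩ := hattainν' u htop
        obtain ⟨t, hut, e₂, hM₂, hb⟩ := hbound' u e hMe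
        rw [← hwte, ← EReal.coe_add]
        have key : Ls + δa * (s : ℝ) - δa * (t : ℝ) ≤ wtG W e₂ := by
          have h1 := hδasub t
          have h2 : lamN (posHullSet (S13.Cl ν)) (t : ℤ) ≤ ((wtG W e₂ : ℝ) : EReal) :=
            le_trans (hνlam t) (S13.ValP_le hM₂)
          exact_mod_cast le_trans h1 h2
        have hut' : (u : ℝ) ≤ t := by exact_mod_cast hut
        refine EReal.coe_le_coe_iff.mpr ?_
        nlinarith [mul_nonneg (sub_nonneg.2 hut') (sub_nonneg.2 hδale)]
    have h3 : ((Ls : ℝ) : EReal) ≤ lamN (posHullSet (S13.Cl ν')) (s : ℤ) := by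
      rw [S13.le_lam_iff]
      intro x hx
      have hxb := S13.N_bound hδa0 hboundA _ hx
      simp only at hxb
      exact EReal.coe_le_coe_iff.mpr (by linarith)
    calc lamN (posHullSet (S13.Cl ν)) (s : ℤ) = (Ls : EReal) := S13.lam_real hν0 hSst s hs
      _ ≤ _ := h3
  -- downward induction tool for direction B
  have down : ∀ db : ℝ, 0 < db → db ≤ δ₀ → ∀ T : ℝ,
      (∀ u : ℕ, ((T : ℝ) : EReal) ≤ lamN (posHullSet (S13.Cl ν')) (u : ℤ) +
        ((db * (u : ℝ) : ℝ) : EReal)) →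
      ∀ u : ℕ, ((T : ℝ) : EReal) ≤ ν u + ((db * (u : ℝ) : ℝ) : EReal) := by
    intro db hdb0 hdble T hT
    have hbase : ∀ u : ℕ, ⌈T / db⌉₊ ≤ u →
        ((T : ℝ) : EReal) ≤ ν u + ((db * (u : ℝ) : ℝ) : EReal) := by
      intro u hu
      have h1 : T ≤ db * (u : ℝ) := by
        have h2 : T / db ≤ (u : ℝ) := le_trans (Nat.le_ceil _) (by exact_mod_cast hu)
        rw [div_le_iff₀ hdb0] at h2
        linarith
      calc ((T : ℝ) : EReal) ≤ ((db * (u : ℝ) : ℝ) : EReal) := by exact_mod_cast h1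
        _ ≤ ν u + ((db * (u : ℝ) : ℝ) : EReal) := by
            have h4 := add_le_add_left (hν0 u) ((db * (u : ℝ) : ℝ) : EReal)
            rwa [zero_add] at h4
    have hstep : ∀ m : ℕ, ∀ u : ℕ, ⌈T / db⌉₊ ≤ u + m →
        ((T : ℝ) : EReal) ≤ ν u + ((db * (u : ℝ) : ℝ) : EReal) := by
      intro m
      induction m with
      | zero => intro u hu; exact hbase u (by omega)
      | succ n ih =>
        intro u hu
        rcases le_or_gt ⌈T / db⌉₊ u with hc | hc
        · exact hbase u hc
        · rcases eq_or_ne (ν u) ⊤ with htop | htop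
          · rw [htop, EReal.top_add_coe]; exact le_top
          · obtain ⟨e, hMe, hwte⟩ := hattainν u htop
            rw [← hwte, ← EReal.coe_add]
            by_cases hsur : S13.MonF (k := k) eta' h' u e
            · have h1 := hT u
              have h2 : lamN (posHullSet (S13.Cl ν')) (u : ℤ) ≤ ((wtG W e : ℝ) : EReal) :=
                le_trans (hν'lam u) (S13.ValP_le hsur)
              calc ((T : ℝ) : EReal) ≤
                  lamN (posHullSet (S13.Cl ν')) (u : ℤ) + ((db * (u : ℝ) : ℝ) : EReal) := h1
                _ ≤ ((wtG W e : ℝ) : EReal) + ((db * (u : ℝ) : ℝ) : EReal) :=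
                    add_le_add_left h2 _
                _ = ((wtG W e + db * (u : ℝ) : ℝ) : EReal) := by rw [← EReal.coe_add]
            · have hdne : (∃ b, MvPowerSeries.coeff e (eta' u b) ≠
                  MvPowerSeries.coeff e (eta u b)) ∨
                  MvPowerSeries.coeff e (h' u) ≠ MvPowerSeries.coeff e (h u) := by
                simp only [S13.MonF, not_or, not_exists, not_not] at hsur
                rcases hMe with ⟨b, hb⟩ | hb
                · exact Or.inl ⟨b, by rw [hsur.1 b]; exact Ne.symm hb⟩
                · exact Or.inr (by rw [hsur.2]; exact Ne.symm hb)
              obtain ⟨t, hts, e₂, hM₂, hb⟩ := hdiff u e hdne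
              have h1 := ih t (by omega)
              have h2 : ((T : ℝ) : EReal) ≤ ((wtG W e₂ + db * (t : ℝ) : ℝ) : EReal) := by
                calc ((T : ℝ) : EReal) ≤ ν t + ((db * (t : ℝ) : ℝ) : EReal) := h1
                  _ ≤ ((wtG W e₂ : ℝ) : EReal) + ((db * (t : ℝ) : ℝ) : EReal) :=
                      add_le_add_left (S13.ValP_le hM₂) _
                  _ = _ := by rw [← EReal.coe_add]
              refine le_trans h2 (EReal.coe_le_coe_iff.mpr ?_)
              have hut : (u : ℝ) + 1 ≤ t := by exact_mod_cast hts
              nlinarith [mul_nonneg (by linarith : (0:ℝ) ≤ (t : ℝ) - u)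
                (by linarith : (0:ℝ) ≤ δ₀ - db)]
    exact fun u => hstep ⌈T / db⌉₊ u (by omega)
  -- direction B : lam ν' ≤ lam ν above the critical height
  have hlamB : ∀ s : ℕ, sm ≤ s →
      lamN (posHullSet (S13.Cl ν')) (s : ℤ) ≤ lamN (posHullSet (S13.Cl ν)) (s : ℤ) := by
    intro s hs
    obtain ⟨δb, hδb0, hδble, hδbsub⟩ := S13.subgrad hν'0 hδ₀ hSb' hSst' s hs
    set Ls' : ℝ := (lamN (posHullSet (S13.Cl ν')) (s : ℤ)).toReal with hLs'
    rw [S13.lam_real hν'0 hSst' s hs]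
    rcases eq_or_lt_of_le hδb0 with hzero | hpos
    · have hup : ∀ ε : ℝ, 0 < ε → ε ≤ δ₀ → ∀ x : ℝ,
          (x, (s : ℝ)) ∈ posHullSet (S13.Cl ν) → Ls' ≤ x + ε * (s : ℝ) := by
        intro ε hε hεle x hx
        have hT : ∀ u : ℕ, ((Ls' : ℝ) : EReal) ≤ lamN (posHullSet (S13.Cl ν')) (u : ℤ) +
            ((ε * (u : ℝ) : ℝ) : EReal) := by
          intro u
          have h1 := hδbsub u
          rw [← hzero] at h1
          simp only [zero_mul, add_zero, sub_zero] at h1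
          calc ((Ls' : ℝ) : EReal) ≤ lamN (posHullSet (S13.Cl ν')) (u : ℤ) := h1
            _ = lamN (posHullSet (S13.Cl ν')) (u : ℤ) + 0 := (add_zero _).symm
            _ ≤ _ := add_le_add_right
                (by exact_mod_cast mul_nonneg hε.le (Nat.cast_nonneg u) : (0 : EReal) ≤ _) _
        have hdown := down ε hε hεle Ls' hT
        have hxb := S13.N_bound hε.le hdown _ hx
        simpa using hxb
      by_contra hcon
      push_neg at hcon
      obtain ⟨x, hx, hxlt⟩ := S13.lam_lt hcon
      have hxr : x < Ls' := by exact_mod_cast hxlt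
      set ε : ℝ := min δ₀ ((Ls' - x) / ((s : ℝ) + 1)) with hε
      have hε0 : 0 < ε := lt_min hδ₀ (div_pos (by linarith) (by positivity))
      have h5 := hup ε hε0 (min_le_left _ _) x hx
      have h6 : ε * (s : ℝ) < Ls' - x := by
        calc ε * (s : ℝ) ≤ (Ls' - x) / ((s : ℝ) + 1) * (s : ℝ) :=
            mul_le_mul_of_nonneg_right (min_le_right _ _) (Nat.cast_nonneg s)
          _ < Ls' - x := by
              rw [div_mul_eq_mul_div, div_lt_iff₀ (by positivity)]
              nlinarith [Nat.cast_nonneg (α := ℝ) s]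
      linarith
    · have hT : ∀ u : ℕ, ((Ls' + δb * (s : ℝ) : ℝ) : EReal) ≤
          lamN (posHullSet (S13.Cl ν')) (u : ℤ) + ((δb * (u : ℝ) : ℝ) : EReal) := by
        intro u
        have h1 := hδbsub u
        calc ((Ls' + δb * (s : ℝ) : ℝ) : EReal) =
            ((Ls' + δb * (s : ℝ) - δb * (u : ℝ) : ℝ) : EReal) + ((δb * (u : ℝ) : ℝ) : EReal) := by
              rw [← EReal.coe_add]
              norm_num
          _ ≤ _ := add_le_add_left h1 _
      have hdown := down δb hpos hδble (Ls' + δb * (s : ℝ)) hT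
      rw [S13.le_lam_iff]
      intro x hx
      have hxb := S13.N_bound hpos.le hdown _ hx
      simp only at hxb
      exact EReal.coe_le_coe_iff.mpr (by linarith)
  have hlameq : ∀ s : ℕ, sm ≤ s →
      lamN (posHullSet (S13.Cl ν)) (s : ℤ) = lamN (posHullSet (S13.Cl ν')) (s : ℤ) :=
    fun s hs => le_antisymm (hlamA s hs) (hlamB s hs)
  -- reduced vectors
  have hredvec : ∀ s : ℕ, sm ≤ s → ∀ e : Idx r l →₀ ℕ,
      ((wtG W e : ℝ) : EReal) = lamN (posHullSet (S13.Cl ν)) (s : ℤ) →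
      (∀ b, MvPowerSeries.coeff e (eta s b) = MvPowerSeries.coeff e (eta' s b)) ∧
        MvPowerSeries.coeff e (h s) = MvPowerSeries.coeff e (h' s) := by
    intro s hs e hwt
    have Hstrict : ∀ t : ℕ, s + 1 ≤ t → ∀ e₂, S13.MonF (k := k) eta h t e₂ →
        wtG W e < ((t : ℝ) - s) * δ₀ + wtG W e₂ := by
      intro t ht e₂ hM₂
      have hνt : ν t ≤ ((wtG W e₂ : ℝ) : EReal) := S13.ValP_le hM₂
      have hνt_ne : ν t ≠ ⊤ := by
        intro hc
        rw [hc] at hνt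
        exact absurd hνt (by simp)
      have hνreal : ν t = (((ν t).toReal : ℝ) : EReal) :=
        (EReal.coe_toReal hνt_ne
          ((lt_of_lt_of_le (EReal.coe_zero ▸ EReal.bot_lt_coe 0) (hν0 t)).ne')).symm
      have hmem : ((((ν t).toReal : ℝ)), ((t : ℕ) : ℝ)) ∈ posHullSet (S13.Cl ν) :=
        S13.mem_N hνreal.symm
      have hgs := S13.gstrict_pt hν0 hδ₀ hSr0 hSb hSst hmaxcrit s t hs (by omega) hmem
      rw [← hwt] at hgs
      have h1 : wtG W e < (ν t).toReal + δ₀ * (t : ℝ) - δ₀ * (s : ℝ) := by exact_mod_cast hgs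
      have h2 : (ν t).toReal ≤ wtG W e₂ := by
        rw [hνreal] at hνt
        exact_mod_cast hνt
      nlinarith
    have heq := heqc s e Hstrict
    exact ⟨fun b => (heq.1 b).symm, heq.2.symm⟩
  -- polygons of the statement
  have hcloud : cloudLev (k := k) w eta h = S13.Cl ν := by
    ext p
    simp only [cloudLev, S13.Cl, Set.mem_setOf_eq, ← hW, hminEq]
  have hcloud' : cloudLev (k := k) w eta' h' = S13.Cl ν' := by
    ext p
    simp only [cloudLev, S13.Cl, Set.mem_setOf_eq, ← hW, hminEq']
  have hNP : NPLev (k := k) w eta h = posHullSet (S13.Cl ν) := by rw [NPLev, hcloud]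
  have hNP' : NPLev (k := k) w eta' h' = posHullSet (S13.Cl ν') := by rw [NPLev, hcloud']
  have hchi : chiN (NPLev (k := k) w eta h) δ₀ = sm := by
    rw [hNP]
    exact S13.chi_eq hν0 hδ₀ hSr0 hSb hSst hmaxcrit
  have hchi' : chiN (NPLev (k := k) w eta' h') δ₀ = sm := by
    rw [hNP']
    exact S13.chi_eq hν'0 hδ₀ hSr0 hSb' hSst' hmax'
  refine ⟨?_, ⟨?_, ?_⟩, ?_⟩
  · intro δ hδp hδle
    simp only [hminEq, hminEq']
    exact part1 δ hδp hδle
  · rw [hchi, hchi']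
  · intro s hs
    rw [hchi] at hs
    rw [hNP, hNP']
    exact hlameq s hs
  · intro s hs e hey hwt
    rw [hchi] at hs
    rw [hNP] at hwt
    obtain ⟨h1, h2⟩ := hredvec s hs e hwt
    exact ⟨fun i => h1 (Sum.inl i), h2⟩
end
end

section
/- Monomial principalization: let w = (w_1,…,w_r) be positive real numbers, linearly independent over ℚ, and let A ⊆ ℤ_{≥0}^r be nonempty. A blow-up move for an ordered pair (i,j) with i ≠ j is allowed when w_i < w_j (for the current weights); it replaces w by w′ with w′_j = w_j − w_i and w′_k = w_k for k ≠ j, and it replaces every multi-index I by I′ with I′_i = I_i + I_j, I′_j = I_j and I′_k = I_k otherwise (so that Σ_k I′_k·w′_k = Σ_k I_k·w_k, and ℚ-linear independence of the weights is preserved). Let I₀ ∈ A be the unique element minimizing Σ_k I_k·w_k (the minimum exists since the set of these values is well-ordered). Then there is a finite sequence of allowed blow-up moves after which the transform of I₀ is componentwise ≤ the transform of every element of A (equivalently, the monomial x^{I₀′} divides x^{I′} for every I ∈ A). -/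
noncomputable section

/-- Effect of the blow-up move for the pair `(i,j)` on the weight vector:
`w'_j = w_j − w_i`, other weights unchanged. -/
def moveW {r : ℕ} (i j : Fin r) (w : Fin r → ℝ) : Fin r → ℝ :=
  Function.update w j (w j - w i)

/-- Effect of the blow-up move for the pair `(i,j)` on a multi-index:
`I'_i = I_i + I_j`, other entries unchanged. -/
def moveI {r : ℕ} (i j : Fin r) (I : Fin r → ℕ) : Fin r → ℕ :=
  Function.update I i (I i + I j)

/-- A chain of blow-up moves is allowed when each move `(i,j)` satisfies `wᵢ < wⱼ`
for the current weights. -/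
def AllowedChain {r : ℕ} : (Fin r → ℝ) → List (Fin r × Fin r) → Prop
  | _, [] => True
  | w, p :: L => w p.1 < w p.2 ∧ AllowedChain (moveW p.1 p.2 w) L

/-- The transform of a multi-index under a chain of moves. -/
def foldI {r : ℕ} (L : List (Fin r × Fin r)) (I : Fin r → ℕ) : Fin r → ℕ :=
  L.foldl (fun I p => moveI p.1 p.2 I) I

namespace S15

variable {r : ℕ}

/-- integer independence of the weights -/
def Indep (w : Fin r → ℝ) : Prop :=
  ∀ c : Fin r → ℤ, (∑ k, (c k : ℝ) * w k) = 0 → ∀ k, c k = 0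

def Good (w : Fin r → ℝ) : Prop := (∀ k, 0 < w k) ∧ Indep w

def foldW {r : ℕ} (L : List (Fin r × Fin r)) (w : Fin r → ℝ) : Fin r → ℝ :=
  L.foldl (fun w p => moveW p.1 p.2 w) w

@[simp] lemma foldI_nil (I : Fin r → ℕ) : foldI [] I = I := rfl
@[simp] lemma foldW_nil (w : Fin r → ℝ) : foldW [] w = w := rfl
lemma foldI_cons (p : Fin r × Fin r) (L) (I : Fin r → ℕ) :
    foldI (p :: L) I = foldI L (moveI p.1 p.2 I) := rfl
lemma foldW_cons (p : Fin r × Fin r) (L) (w : Fin r → ℝ) :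
    foldW (p :: L) w = foldW L (moveW p.1 p.2 w) := rfl

lemma foldI_append (L₁ L₂ : List (Fin r × Fin r)) (I : Fin r → ℕ) :
    foldI (L₁ ++ L₂) I = foldI L₂ (foldI L₁ I) := by
  simp [foldI, List.foldl_append]

lemma foldW_append (L₁ L₂ : List (Fin r × Fin r)) (w : Fin r → ℝ) :
    foldW (L₁ ++ L₂) w = foldW L₂ (foldW L₁ w) := by
  simp [foldW, List.foldl_append]

lemma allowedChain_append {w : Fin r → ℝ} {L₁ L₂ : List (Fin r × Fin r)} :
    AllowedChain w (L₁ ++ L₂) ↔ AllowedChain w L₁ ∧ AllowedChain (foldW L₁ w) L₂ := by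
  induction L₁ generalizing w with
  | nil => simp [AllowedChain]
  | cons p L ih => simp [AllowedChain, ih, foldW_cons, and_assoc]

lemma moveI_mono {a b : Fin r} {I J : Fin r → ℕ} (h : ∀ k, I k ≤ J k) :
    ∀ k, moveI a b I k ≤ moveI a b J k := by
  intro k
  by_cases hk : k = a
  · rw [hk]; simp only [moveI, Function.update_self]
    exact Nat.add_le_add (h a) (h b)
  · simp only [moveI, Function.update_of_ne hk]; exact h k

lemma foldI_mono {L : List (Fin r × Fin r)} {I J : Fin r → ℕ} (h : ∀ k, I k ≤ J k) :
    ∀ k, foldI L I k ≤ foldI L J k := by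
  induction L generalizing I J with
  | nil => simpa using h
  | cons p L ih => exact ih (moveI_mono h)

lemma good_move {w : Fin r → ℝ} (hG : Good w) {a b : Fin r} (hab : w a < w b) :
    Good (moveW a b w) := by
  obtain ⟨hpos, hind⟩ := hG
  have hne : a ≠ b := fun h => absurd hab (by simp [h])
  constructor
  · intro k
    by_cases hk : k = b
    · subst hk; simp only [moveW, Function.update_self]; linarith
    · simp only [moveW, Function.update_of_ne hk]; exact hpos k
  · intro c hc
    set c' : Fin r → ℤ := fun k => if k = a then c a - c b else c k with hc'
    have hsum : (∑ k, (c' k : ℝ) * w k) = ∑ k, (c k : ℝ) * moveW a b w k := by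
      have key : ∀ k, (c' k : ℝ) * w k
          = (c k : ℝ) * moveW a b w k + (if k = a then -((c b : ℝ) * w a) else 0)
            + (if k = b then (c b : ℝ) * w a else 0) := by
        intro k
        by_cases hka : k = a
        · rw [hka, if_pos rfl, if_neg hne]
          simp only [hc', if_pos rfl, moveW, Function.update_of_ne hne]
          push_cast; ring
        · by_cases hkb : k = b
          · rw [hkb, if_neg (hkb ▸ hka), if_pos rfl]
            simp only [hc', if_neg (hkb ▸ hka : ¬ b = a), moveW, Function.update_self]
            push_cast; ring
          · simp only [hc', if_neg hka, if_neg hkb, moveW, Function.update_of_ne hkb, add_zero]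
      rw [Finset.sum_congr rfl fun k _ => key k]
      rw [Finset.sum_add_distrib, Finset.sum_add_distrib]
      simp
    have h0 := hind c' (by rw [hsum, hc])
    have hb0 : c b = 0 := by have := h0 b; simpa [hc', hne.symm] using this
    intro k
    by_cases hk : k = a
    · rw [hk]; have := h0 a; simp [hc'] at this; omega
    · have := h0 k; simpa [hc', hk] using this

lemma good_foldW {w : Fin r → ℝ} {L : List (Fin r × Fin r)} (hG : Good w)
    (hc : AllowedChain w L) : Good (foldW L w) := by
  induction L generalizing w with
  | nil => simpa using hG
  | cons p L ih => exact ih (good_move hG hc.1) hc.2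

lemma sum_move {w : Fin r → ℝ} {a b : Fin r} (hne : a ≠ b) (I : Fin r → ℕ) :
    (∑ k, (moveI a b I k : ℝ) * moveW a b w k) = ∑ k, (I k : ℝ) * w k := by
  have key : ∀ k, (moveI a b I k : ℝ) * moveW a b w k
      = (I k : ℝ) * w k + (if k = a then (I b : ℝ) * w a else 0)
        + (if k = b then -((I b : ℝ) * w a) else 0) := by
    intro k
    by_cases hka : k = a
    · rw [hka, if_pos rfl, if_neg hne]
      simp only [moveI, moveW, Function.update_self, Function.update_of_ne hne]
      push_cast; ring
    · by_cases hkb : k = b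
      · rw [hkb, if_neg (hkb ▸ hka : ¬ b = a), if_pos rfl]
        simp only [moveI, moveW, Function.update_self,
          Function.update_of_ne (hkb ▸ hka : ¬ b = a)]
        push_cast; ring
      · rw [if_neg hka, if_neg hkb]
        simp only [moveI, moveW, Function.update_of_ne hka, Function.update_of_ne hkb, add_zero]
  rw [Finset.sum_congr rfl fun k _ => key k]
  rw [Finset.sum_add_distrib, Finset.sum_add_distrib]
  simp

lemma sum_foldI {w : Fin r → ℝ} {L : List (Fin r × Fin r)} (hc : AllowedChain w L)
    (I : Fin r → ℕ) :
    (∑ k, (foldI L I k : ℝ) * foldW L w k) = ∑ k, (I k : ℝ) * w k := by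
  induction L generalizing w I with
  | nil => simp
  | cons p L ih =>
    have hne : p.1 ≠ p.2 := fun h => absurd hc.1 (by simp [h])
    rw [foldI_cons, foldW_cons, ih hc.2, sum_move hne]

lemma sum_inj {w : Fin r → ℝ} (hind : Indep w) {I J : Fin r → ℕ}
    (h : (∑ k, (I k : ℝ) * w k) = ∑ k, (J k : ℝ) * w k) : I = J := by
  have h0 : (∑ k, (((I k : ℤ) - (J k : ℤ) : ℤ) : ℝ) * w k) = 0 := by
    push_cast
    simp only [sub_mul]
    rw [Finset.sum_sub_distrib, h, sub_self]
  have := hind _ h0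
  funext k
  have hk := this k
  omega

lemma indep_ne {w : Fin r → ℝ} (hind : Indep w) {i j : Fin r} (hij : i ≠ j) : w i ≠ w j := by
  intro he
  set c : Fin r → ℤ := fun k => if k = i then 1 else if k = j then -1 else 0 with hc
  have h0 : (∑ k, (c k : ℝ) * w k) = 0 := by
    have key : ∀ k, (c k : ℝ) * w k
        = (if k = i then w i else 0) + (if k = j then -(w j) else 0) := by
      intro k
      by_cases hki : k = i
      · subst hki; simp [hc, hij, if_neg (fun h => hij h)]
      · by_cases hkj : k = j
        · subst hkj; simp [hc, hki]
        · simp [hc, hki, hkj]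
    rw [Finset.sum_congr rfl fun k _ => key k, Finset.sum_add_distrib]
    simp [he]
  have := hind c h0 i
  simp [hc] at this

end S15

namespace S15

variable {r : ℕ}

def M1 (I J : Fin r → ℕ) : ℕ := Finset.univ.sup fun k => I k - J k
def cnt (I J : Fin r → ℕ) : ℕ := (Finset.univ.filter fun k => I k - J k = M1 I J).card
def posP (I J : Fin r → ℕ) : ℕ := ∑ k, (J k - I k)

lemma pair : ∀ (A P : ℕ) (w : Fin r → ℝ) (I J : Fin r → ℕ), Good w →
    ((∑ k, (I k : ℝ) * w k) ≤ ∑ k, (J k : ℝ) * w k) →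
    M1 I J * (r + 1) + cnt I J ≤ A → posP I J ≤ P →
    ∃ L, AllowedChain w L ∧ ∀ k, foldI L I k ≤ foldI L J k := by
  intro A
  induction A using Nat.strong_induction_on with
  | _ A ihA =>
  intro P
  induction P using Nat.strong_induction_on with
  | _ P ihP =>
  intro w I J hG hle hA hP
  by_cases hdone : ∀ k, I k ≤ J k
  · exact ⟨[], trivial, by simpa using hdone⟩
  · push_neg at hdone
    obtain ⟨k₀, hk₀⟩ := hdone
    obtain ⟨i, -, hi⟩ := Finset.exists_max_image Finset.univ (fun k => I k - J k)
      ⟨k₀, Finset.mem_univ _⟩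
    have hiM : I i - J i = M1 I J := by
      show _ = Finset.univ.sup fun k => I k - J k
      exact le_antisymm (Finset.le_sup (f := fun k => I k - J k) (Finset.mem_univ i))
        (Finset.sup_le fun k _ => hi k (Finset.mem_univ k))
    have hipos : J i < I i := by have := hi k₀ (Finset.mem_univ k₀); omega
    have hlt : (∑ k, (I k : ℝ) * w k) < ∑ k, (J k : ℝ) * w k := by
      rcases hle.lt_or_eq with h | h
      · exact h
      · exfalso; have := congrFun (sum_inj hG.2 h) i; omega
    obtain ⟨j0, hj0⟩ : ∃ j, I j < J j := by
      by_contra hcon; push_neg at hcon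
      have : (∑ k, (J k : ℝ) * w k) ≤ ∑ k, (I k : ℝ) * w k :=
        Finset.sum_le_sum fun k _ =>
          mul_le_mul_of_nonneg_right (Nat.cast_le.2 (hcon k)) (le_of_lt (hG.1 k))
      linarith
    have hM1pos : 1 ≤ M1 I J := by omega
    by_cases hfree : ∃ j, (I j < J j) ∧ w i < w j
    · obtain ⟨j, hjp, hwij⟩ := hfree
      have hij : i ≠ j := by intro h; rw [h] at hipos; omega
      have hG' : Good (moveW i j w) := good_move hG hwij
      have hle' : (∑ k, (moveI i j I k : ℝ) * moveW i j w k)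
          ≤ ∑ k, (moveI i j J k : ℝ) * moveW i j w k := by
        rw [sum_move hij, sum_move hij]; exact hle
      set I' := moveI i j I with hI'
      set J' := moveI i j J with hJ'
      have hfixI : ∀ k, k ≠ i → I' k = I k := fun k hk => Function.update_of_ne hk _ _
      have hfixJ : ∀ k, k ≠ i → J' k = J k := fun k hk => Function.update_of_ne hk _ _
      have hIi : I' i = I i + I j := Function.update_self _ _ _
      have hJi : J' i = J i + J j := Function.update_self _ _ _
      have hnegi : I' i - J' i < M1 I J := by rw [hIi, hJi, ← hiM]; omega
      have hM1le : M1 I' J' ≤ M1 I J := by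
        show Finset.univ.sup (fun k => I' k - J' k) ≤ M1 I J
        refine Finset.sup_le fun k _ => ?_
        by_cases hk : k = i
        · rw [hk]; exact le_of_lt hnegi
        · rw [hfixI k hk, hfixJ k hk, ← hiM]; exact hi k (Finset.mem_univ k)
      have hcnt' : cnt I' J' ≤ r :=
        le_trans (Finset.card_filter_le _ _) (by simp [Finset.card_univ])
      have hAstat : M1 I' J' * (r + 1) + cnt I' J' < M1 I J * (r + 1) + cnt I J := by
        rcases lt_or_eq_of_le hM1le with hM | hM
        · calc M1 I' J' * (r + 1) + cnt I' J' < M1 I' J' * (r + 1) + (r + 1) := by omega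
            _ = (M1 I' J' + 1) * (r + 1) := by ring
            _ ≤ M1 I J * (r + 1) := Nat.mul_le_mul_right _ (by omega)
            _ ≤ M1 I J * (r + 1) + cnt I J := Nat.le_add_right _ _
        · have hsub : (Finset.univ.filter fun k => I' k - J' k = M1 I' J')
              ⊂ Finset.univ.filter fun k => I k - J k = M1 I J := by
            have hsubset : (Finset.univ.filter fun k => I' k - J' k = M1 I' J')
                ⊆ Finset.univ.filter fun k => I k - J k = M1 I J := by
              intro k hk
              rw [Finset.mem_filter] at hk ⊢
              refine ⟨Finset.mem_univ _, ?_⟩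
              have hki : k ≠ i := by intro h; rw [h] at hk; omega
              rw [← hfixI k hki, ← hfixJ k hki, hk.2, hM]
            refine (Finset.ssubset_iff_of_subset hsubset).2 ⟨i, ?_, ?_⟩
            · exact Finset.mem_filter.2 ⟨Finset.mem_univ _, hiM⟩
            · intro hcon
              rw [Finset.mem_filter] at hcon
              omega
          have := Finset.card_lt_card hsub
          rw [hM]
          unfold cnt
          omega
      obtain ⟨L', hc', hd'⟩ := ihA _ (lt_of_lt_of_le hAstat hA) (posP I' J')
        (moveW i j w) I' J' hG' hle' le_rfl le_rfl
      exact ⟨(i, j) :: L', ⟨hwij, hc'⟩, hd'⟩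
    · push_neg at hfree
      have hij : j0 ≠ i := fun h => by rw [h] at hj0; omega
      have hwji : w j0 < w i :=
        lt_of_le_of_ne (hfree j0 hj0) (indep_ne hG.2 hij)
      have hG' : Good (moveW j0 i w) := good_move hG hwji
      have hle' : (∑ k, (moveI j0 i I k : ℝ) * moveW j0 i w k)
          ≤ ∑ k, (moveI j0 i J k : ℝ) * moveW j0 i w k := by
        rw [sum_move hij, sum_move hij]; exact hle
      set I' := moveI j0 i I with hI'
      set J' := moveI j0 i J with hJ'
      have hfixI : ∀ k, k ≠ j0 → I' k = I k := fun k hk => Function.update_of_ne hk _ _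
      have hfixJ : ∀ k, k ≠ j0 → J' k = J k := fun k hk => Function.update_of_ne hk _ _
      have hIj : I' j0 = I j0 + I i := Function.update_self _ _ _
      have hJj : J' j0 = J j0 + J i := Function.update_self _ _ _
      have hnegj : I' j0 - J' j0 < M1 I J := by rw [hIj, hJj]; omega
      have hM1eq : M1 I' J' = M1 I J := by
        show Finset.univ.sup (fun k => I' k - J' k) = M1 I J
        refine le_antisymm (Finset.sup_le fun k _ => ?_) ?_
        · by_cases hk : k = j0
          · rw [hk]; exact le_of_lt hnegj
          · rw [hfixI k hk, hfixJ k hk, ← hiM]; exact hi k (Finset.mem_univ k)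
        · rw [← hiM]
          have : I' i - J' i = I i - J i := by
            rw [hfixI i (Ne.symm hij), hfixJ i (Ne.symm hij)]
          calc I i - J i = I' i - J' i := this.symm
            _ ≤ M1 I' J' := Finset.le_sup (f := fun k => I' k - J' k) (Finset.mem_univ i)
      have hcnteq : cnt I' J' = cnt I J := by
        unfold cnt
        congr 1
        apply Finset.filter_congr
        intro k _
        by_cases hk : k = j0
        · rw [hk]
          constructor
          · intro h; rw [hM1eq] at h; omega
          · intro h; omega
        · rw [hfixI k hk, hfixJ k hk, hM1eq]
      have hPstat : posP I' J' < posP I J := by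
        apply Finset.sum_lt_sum
        · intro k _
          by_cases hk : k = j0
          · rw [hk, hIj, hJj]; omega
          · rw [hfixI k hk, hfixJ k hk]
        · exact ⟨j0, Finset.mem_univ _, by rw [hIj, hJj]; omega⟩
      obtain ⟨L', hc', hd'⟩ := ihP _ (lt_of_lt_of_le hPstat hP)
        (moveW j0 i w) I' J' hG' hle' (by rw [hM1eq, hcnteq]; exact hA) le_rfl
      exact ⟨(j0, i) :: L', ⟨hwji, hc'⟩, hd'⟩

end S15

namespace S15

variable {r : ℕ}

lemma multi : ∀ (B : List (Fin r → ℕ)) (w : Fin r → ℝ) (I₀ : Fin r → ℕ), Good w →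
    (∀ J ∈ B, (∑ k, (I₀ k : ℝ) * w k) ≤ ∑ k, (J k : ℝ) * w k) →
    ∃ L, AllowedChain w L ∧ ∀ J ∈ B, ∀ k, foldI L I₀ k ≤ foldI L J k := by
  intro B
  induction B with
  | nil => exact fun w I₀ _ _ => ⟨[], trivial, by simp⟩
  | cons J B ih =>
    intro w I₀ hG h
    obtain ⟨L₁, hc₁, hd₁⟩ := ih w I₀ hG fun K hK => h K (List.mem_cons_of_mem _ hK)
    have hG₁ : Good (foldW L₁ w) := good_foldW hG hc₁
    have hle₁ : (∑ k, (foldI L₁ I₀ k : ℝ) * foldW L₁ w k)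
        ≤ ∑ k, (foldI L₁ J k : ℝ) * foldW L₁ w k := by
      rw [sum_foldI hc₁, sum_foldI hc₁]
      exact h J List.mem_cons_self
    obtain ⟨L₂, hc₂, hd₂⟩ := pair (M1 (foldI L₁ I₀) (foldI L₁ J) * (r + 1)
        + cnt (foldI L₁ I₀) (foldI L₁ J)) (posP (foldI L₁ I₀) (foldI L₁ J))
      (foldW L₁ w) (foldI L₁ I₀) (foldI L₁ J) hG₁ hle₁ le_rfl le_rfl
    refine ⟨L₁ ++ L₂, allowedChain_append.2 ⟨hc₁, hc₂⟩, ?_⟩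
    intro K hK k
    rw [foldI_append, foldI_append]
    rcases List.mem_cons.1 hK with hKJ | hKB
    · rw [hKJ]; exact hd₂ k
    · exact foldI_mono (hd₁ K hKB) k

/-- Dickson covering: every nonempty set of multi-indices is covered from below by a
finite subset. -/
lemma dickson (A : Set (Fin r → ℕ)) :
    ∃ B : Finset (Fin r → ℕ), ↑B ⊆ A ∧ ∀ a ∈ A, ∃ b ∈ B, ∀ k, b k ≤ a k := by
  classical
  set M : Set (Fin r → ℕ) := {a | a ∈ A ∧ ∀ c ∈ A, (∀ k, c k ≤ a k) → c = a} with hM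
  have hstep : ∀ n : ℕ, ∀ a ∈ A, (∑ k, a k) ≤ n → ∃ m ∈ M, ∀ k, m k ≤ a k := by
    intro n
    induction n using Nat.strong_induction_on with
    | _ n ihn =>
    intro a ha hn
    by_cases hmin : ∀ c ∈ A, (∀ k, c k ≤ a k) → c = a
    · exact ⟨a, ⟨ha, hmin⟩, fun k => le_rfl⟩
    · push_neg at hmin
      obtain ⟨c, hcA, hca, hcne⟩ := hmin
      have hlt : (∑ k, c k) < ∑ k, a k := by
        refine Finset.sum_lt_sum (fun k _ => hca k) ?_
        by_contra hcon; push_neg at hcon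
        exact hcne (funext fun k => le_antisymm (hca k) (hcon k (Finset.mem_univ k)))
      obtain ⟨m, hmM, hm⟩ := ihn (∑ k, c k) (by omega) c hcA le_rfl
      exact ⟨m, hmM, fun k => le_trans (hm k) (hca k)⟩
  have hMfin : M.Finite := by
    by_contra hinf
    have hI : M.Infinite := hinf
    set f := hI.natEmbedding with hf
    have hpwo : M.IsPWO :=
      Set.isPWO_of_wellQuasiOrderedLE M
    obtain ⟨m, n, hmn, hle⟩ := hpwo.exists_lt (f := fun n => (f n : Fin r → ℕ)) (fun n => (f n).2)
    have heq : (f m : Fin r → ℕ) = f n :=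
      (f n).2.2 (f m) (f m).2.1 fun k => hle k
    exact absurd (Subtype.ext heq ▸ rfl : f m = f n) (by
      intro h
      exact absurd (f.injective (Subtype.ext heq)) (Nat.ne_of_lt hmn))
  refine ⟨hMfin.toFinset, ?_, ?_⟩
  · intro b hb
    rw [Set.Finite.coe_toFinset] at hb
    exact hb.1
  · intro a ha
    obtain ⟨m, hmM, hm⟩ := hstep (∑ k, a k) a ha le_rfl
    exact ⟨m, hMfin.mem_toFinset.2 hmM, hm⟩

end S15

namespace S15

lemma indep_of_li {r : ℕ} {w : Fin r → ℝ} (hind : LinearIndependent ℚ w) : Indep w := by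
  intro c hc k
  have h := Fintype.linearIndependent_iff.1 hind (fun k => (c k : ℚ)) ?_ k
  · exact_mod_cast h
  · calc (∑ i, ((c i : ℚ) • w i)) = ∑ i, (c i : ℝ) * w i :=
        Finset.sum_congr rfl fun i _ => by rw [Rat.smul_def]; norm_num
    _ = 0 := hc

end S15


/-- monomial principalization: after finitely many allowed blow-up
moves, the transform of the minimizing multi-index `I₀` divides (componentwise) the
transform of every element of `A`. -/
theorem statement15 {r : ℕ} (hr : 0 < r) (w : Fin r → ℝ) (hw : ∀ i, 0 < w i)
    (hind : LinearIndependent ℚ w) (A : Set (Fin r → ℕ)) (hA : A.Nonempty)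
    (I₀ : Fin r → ℕ) (hI₀ : I₀ ∈ A)
    (hmin : ∀ I ∈ A, (∑ i, (I₀ i : ℝ) * w i) ≤ ∑ i, (I i : ℝ) * w i) :
    ∃ L : List (Fin r × Fin r), AllowedChain w L ∧
      ∀ I ∈ A, ∀ idx : Fin r, foldI L I₀ idx ≤ foldI L I idx := by
  have hG : S15.Good w := ⟨hw, S15.indep_of_li hind⟩
  obtain ⟨B, hBA, hBcov⟩ := S15.dickson A
  obtain ⟨L, hc, hd⟩ := S15.multi B.toList w I₀ hG
    (fun J hJ => hmin J (hBA (Finset.mem_coe.2 (Finset.mem_toList.1 hJ))))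
  refine ⟨L, hc, ?_⟩
  intro I hI idx
  obtain ⟨b, hbB, hb⟩ := hBcov I hI
  exact le_trans (hd b (Finset.mem_toList.2 hbB) idx) (S15.foldI_mono hb idx)
end
end

section
/- Assume ω ≠ 0 and fix γ ∈ ℝ. Define: a level ω_s is ρ-dominant if ν_A(z·ω_s) ≤ ρ and both η_s and h_s are ν_A(z·ω_s)-final; ρ-recessive if ν_A(z·ω_s) > ρ; ρ-final if either holds. Set ς = min_s(ν_A(z·ω_s) + sδ), Cl = {(ν_A(z·ω_s), s) : s ≥ 0}, Cl^γ = {(ν_A(z·ω_s), s) : ω_s is (γ − sδ)-dominant}, ς^γ = min{a + sδ : (a,s) ∈ Cl^γ} (with ς^γ = ∞ if Cl^γ = ∅), and L = {(a,b) : a + bδ = ς}. Say ω is γ-prepared if every level ω_s is (min{γ,ς} − sδ)-final. Then ω is γ-prepared if and only if either ς > γ, or both ς = ς^γ and L ∩ Cl = L ∩ Cl^γ. Moreover, in the latter case every level with ν_A(z·ω_s) + sδ = ς is (γ − sδ)-dominant; in particular the critical vertex (ς − χδ, χ), with χ = max{s : ν_A(z·ω_s) + sδ = ς}, corresponds to a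 dominant level. -/
noncomputable section
open MvPowerSeries Classical

/-- `f` is `ρ`-final (dominant or recessive), for an extended-real bound `ρ`. -/
def FinFnAt {k : Type} [Field k] {σ : Type} (W : σ → ℝ) (isX : σ → Prop) (ρ : EReal)
    (f : MvPowerSeries σ k) : Prop :=
  ρ < nuG W f ∨ (nuG W f ≤ ρ ∧ DomAtG W isX f)

/-- A 1-form is `ρ`-final (dominant or recessive), for an extended-real bound `ρ`. -/
def Fin1At {k : Type} [Field k] {σ : Type} (W : σ → ℝ) (isX : σ → Prop) (ρ : EReal)
    (η : σ → MvPowerSeries σ k) : Prop :=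
  ρ < nu1G W η ∨ (nu1G W η ≤ ρ ∧ Dom1AtG W isX η)

/-- `ν_A(z·ω_s) = min{ν_A(η_s), ν_A(h_s)}`. -/
def levVal {k : Type} [Field k] {r l : ℕ} (w : Fin r → ℝ)
    (eta : ℕ → Idx r l → MvPowerSeries (Idx r l) k)
    (h : ℕ → MvPowerSeries (Idx r l) k) (s : ℕ) : EReal :=
  min (nu1G (Sum.elim w fun _ => (0:ℝ)) (eta s)) (nuG (Sum.elim w fun _ => (0:ℝ)) (h s))

/-- The critical value `ς = min_s (ν_A(z·ω_s) + sδ)`. -/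
def sigLev {k : Type} [Field k] {r l : ℕ} (w : Fin r → ℝ)
    (eta : ℕ → Idx r l → MvPowerSeries (Idx r l) k)
    (h : ℕ → MvPowerSeries (Idx r l) k) (δ : ℝ) : EReal :=
  ⨅ s : ℕ, (levVal w eta h s + ((s * δ : ℝ) : EReal))

/-- The level `ω_s` is `ρ`-dominant: `ν_A(z·ω_s) ≤ ρ` and both `η_s` and `h_s`
are `ν_A(z·ω_s)`-final. -/
def DomLevel {k : Type} [Field k] {r l : ℕ} (w : Fin r → ℝ)
    (eta : ℕ → Idx r l → MvPowerSeries (Idx r l) k)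
    (h : ℕ → MvPowerSeries (Idx r l) k) (s : ℕ) (ρ : EReal) : Prop :=
  levVal w eta h s ≤ ρ ∧
  Fin1At (Sum.elim w fun _ => (0:ℝ)) (fun t => t.isLeft = true) (levVal w eta h s) (eta s) ∧
  FinFnAt (Sum.elim w fun _ => (0:ℝ)) (fun t => t.isLeft = true) (levVal w eta h s) (h s)

/-- The level `ω_s` is `ρ`-final: `ρ`-dominant or `ρ`-recessive. -/
def FinLevel {k : Type} [Field k] {r l : ℕ} (w : Fin r → ℝ)
    (eta : ℕ → Idx r l → MvPowerSeries (Idx r l) k)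
    (h : ℕ → MvPowerSeries (Idx r l) k) (s : ℕ) (ρ : EReal) : Prop :=
  DomLevel w eta h s ρ ∨ ρ < levVal w eta h s

/-- `ω` is `γ`-prepared: every level `ω_s` is `(min{γ,ς} − sδ)`-final. -/
def Prepared {k : Type} [Field k] {r l : ℕ} (w : Fin r → ℝ)
    (eta : ℕ → Idx r l → MvPowerSeries (Idx r l) k)
    (h : ℕ → MvPowerSeries (Idx r l) k) (δ γ : ℝ) : Prop :=
  ∀ s : ℕ, FinLevel w eta h s
    (min ((γ : ℝ) : EReal) (sigLev w eta h δ) - ((s * δ : ℝ) : EReal))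

/-- The `γ`-dominant critical value `ς^γ` (`∞` if no level is `(γ−sδ)`-dominant). -/
def sigGam {k : Type} [Field k] {r l : ℕ} (w : Fin r → ℝ)
    (eta : ℕ → Idx r l → MvPowerSeries (Idx r l) k)
    (h : ℕ → MvPowerSeries (Idx r l) k) (δ γ : ℝ) : EReal :=
  ⨅ s : ℕ, if DomLevel w eta h s (((γ - s * δ : ℝ)) : EReal)
    then levVal w eta h s + ((s * δ : ℝ) : EReal) else ⊤

/-! ### Auxiliary lemmas for the proof -/

private lemma erle {a c : EReal} (b : ℝ) : a ≤ c - (b : EReal) ↔ a + (b : EReal) ≤ c :=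
  EReal.le_sub_iff_add_le (Or.inl (EReal.coe_ne_bot b)) (Or.inl (EReal.coe_ne_top b))

private lemma erlt {a c : EReal} (b : ℝ) : c - (b : EReal) < a ↔ c < a + (b : EReal) :=
  EReal.sub_lt_iff (Or.inl (EReal.coe_ne_bot b)) (Or.inl (EReal.coe_ne_top b))

private lemma nuG_nonneg {k : Type} [Field k] {σ : Type} {W : σ → ℝ} (hW : ∀ i, 0 ≤ W i)
    (f : MvPowerSeries σ k) : (0 : EReal) ≤ nuG W f := by
  refine le_sInf ?_
  rintro v ⟨e, -, rfl⟩
  refine EReal.coe_nonneg.2 ?_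
  rw [wtG, Finsupp.sum]
  refine Finset.sum_nonneg fun i _ => mul_nonneg (Nat.cast_nonneg (e i)) (hW i)

private lemma levVal_nonneg {k : Type} [Field k] {r l : ℕ} (w : Fin r → ℝ)
    (hw : ∀ i, 0 < w i) (eta : ℕ → Idx r l → MvPowerSeries (Idx r l) k)
    (h : ℕ → MvPowerSeries (Idx r l) k) (s : ℕ) : (0 : EReal) ≤ levVal w eta h s := by
  have hW : ∀ i : Idx r l, 0 ≤ Sum.elim w (fun _ => (0:ℝ)) i := by
    rintro (i | j)
    · exact (hw i).le
    · exact le_rfl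
  simp only [levVal, nu1G]
  exact le_min (le_iInf fun b => nuG_nonneg hW _) (nuG_nonneg hW _)

private lemma sigLev_le {k : Type} [Field k] {r l : ℕ} (w : Fin r → ℝ)
    (eta : ℕ → Idx r l → MvPowerSeries (Idx r l) k)
    (h : ℕ → MvPowerSeries (Idx r l) k) (δ : ℝ) (s : ℕ) :
    sigLev w eta h δ ≤ levVal w eta h s + ((s * δ : ℝ) : EReal) := by
  simp only [sigLev]
  exact iInf_le _ s

private lemma sδ_le_term {k : Type} [Field k] {r l : ℕ} (w : Fin r → ℝ)
    (hw : ∀ i, 0 < w i) (eta : ℕ → Idx r l → MvPowerSeries (Idx r l) k)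
    (h : ℕ → MvPowerSeries (Idx r l) k) (δ : ℝ) (s : ℕ) :
    (((s : ℝ) * δ : ℝ) : EReal) ≤ levVal w eta h s + ((s * δ : ℝ) : EReal) := by
  have := add_le_add_right (levVal_nonneg w hw eta h s) (((s : ℝ) * δ : ℝ) : EReal)
  rw [add_comm]
  simpa using this

private lemma sigLev_nonneg {k : Type} [Field k] {r l : ℕ} (w : Fin r → ℝ)
    (hw : ∀ i, 0 < w i) (eta : ℕ → Idx r l → MvPowerSeries (Idx r l) k)
    (h : ℕ → MvPowerSeries (Idx r l) k) {δ : ℝ} (hδ : 0 < δ) :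
    (0 : EReal) ≤ sigLev w eta h δ := by
  simp only [sigLev]
  refine le_iInf fun s => le_trans ?_ (sδ_le_term w hw eta h δ s)
  exact EReal.coe_nonneg.2 (mul_nonneg (Nat.cast_nonneg s) hδ.le)

private lemma sig_attained {k : Type} [Field k] {r l : ℕ} (w : Fin r → ℝ)
    (hw : ∀ i, 0 < w i) (eta : ℕ → Idx r l → MvPowerSeries (Idx r l) k)
    (h : ℕ → MvPowerSeries (Idx r l) k) {δ : ℝ} (hδ : 0 < δ)
    (hfin : sigLev w eta h δ < ⊤) :
    ∃ s : ℕ, levVal w eta h s + ((s * δ : ℝ) : EReal) = sigLev w eta h δ := by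
  by_contra hcon
  push_neg at hcon
  have hlt : ∀ s : ℕ, sigLev w eta h δ < levVal w eta h s + ((s * δ : ℝ) : EReal) :=
    fun s => lt_of_le_of_ne (sigLev_le w eta h δ s) (fun he => hcon s he.symm)
  have h0 : (0 : EReal) ≤ sigLev w eta h δ := sigLev_nonneg w hw eta h hδ
  have hbot : sigLev w eta h δ ≠ ⊥ := fun hb => by
    rw [hb] at h0; exact absurd h0 (by simp)
  set c : ℝ := (sigLev w eta h δ).toReal with hcdef
  have hc : sigLev w eta h δ = (c : EReal) := (EReal.coe_toReal hfin.ne hbot).symm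
  set N : ℕ := ⌈c / δ⌉₊ + 1 with hNdef
  have hNδ : c < (N : ℝ) * δ := by
    have h1 : c / δ < (N : ℝ) := by
      have h2 := Nat.le_ceil (c / δ)
      have h3 : ((⌈c / δ⌉₊ : ℝ)) < (N : ℝ) := by
        rw [hNdef]; push_cast; linarith
      linarith
    calc c = c / δ * δ := (div_mul_cancel₀ c hδ.ne').symm
      _ < (N : ℝ) * δ := mul_lt_mul_of_pos_right h1 hδ
  have hne : (Finset.range N).Nonempty := ⟨0, Finset.mem_range.2 (Nat.succ_pos _)⟩
  set T : ℕ → EReal := fun s => levVal w eta h s + ((s * δ : ℝ) : EReal) with hT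
  set m : EReal := min ((Finset.range N).inf' hne T) (((N : ℝ) * δ : ℝ) : EReal) with hm
  have h1 : sigLev w eta h δ < m := by
    refine lt_min ?_ ?_
    · exact (Finset.lt_inf'_iff hne).2 fun s _ => hlt s
    · rw [hc]; exact_mod_cast hNδ
  have h2 : m ≤ sigLev w eta h δ := by
    simp only [sigLev]
    refine le_iInf fun s => ?_
    by_cases hsN : s < N
    · exact (min_le_left _ _).trans (Finset.inf'_le T (Finset.mem_range.2 hsN))
    · push_neg at hsN
      refine (min_le_right _ _).trans ?_
      refine le_trans ?_ (sδ_le_term w hw eta h δ s)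
      refine EReal.coe_le_coe_iff.2 ?_
      exact mul_le_mul_of_nonneg_right (Nat.cast_le.2 hsN) hδ.le
  exact absurd (h1.trans_le h2) (lt_irrefl _)

private lemma domLevel_mono {k : Type} [Field k] {r l : ℕ} {w : Fin r → ℝ}
    {eta : ℕ → Idx r l → MvPowerSeries (Idx r l) k}
    {h : ℕ → MvPowerSeries (Idx r l) k} {s : ℕ} {ρ ρ' : EReal}
    (hle : levVal w eta h s ≤ ρ') (hd : DomLevel w eta h s ρ) :
    DomLevel w eta h s ρ' :=
  ⟨hle, hd.2.1, hd.2.2⟩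

/-- characterization of `γ`-preparedness, and dominance of the levels on
the critical segment (in particular of the critical vertex). -/
theorem statement17 {k : Type} [Field k] [CharZero k] {r l : ℕ} (hr : 0 < r)
    (w : Fin r → ℝ) (hw : ∀ i, 0 < w i) (hind : LinearIndependent ℚ w)
    (eta : ℕ → Idx r l → MvPowerSeries (Idx r l) k)
    (h : ℕ → MvPowerSeries (Idx r l) k) (hh0 : h 0 = 0)
    (hω : ∃ s, (∃ b, eta s b ≠ 0) ∨ h s ≠ 0)
    (δ γ : ℝ) (hδ : 0 < δ) :
    (Prepared w eta h δ γ ↔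
      (((γ : ℝ) : EReal) < sigLev w eta h δ ∨
        (sigLev w eta h δ = sigGam w eta h δ γ ∧
          ∀ s : ℕ, levVal w eta h s + ((s * δ : ℝ) : EReal) = sigLev w eta h δ →
            DomLevel w eta h s (((γ - s * δ : ℝ)) : EReal)))) ∧
    (Prepared w eta h δ γ → ¬ ((γ : ℝ) : EReal) < sigLev w eta h δ →
      (∀ s : ℕ, levVal w eta h s + ((s * δ : ℝ) : EReal) = sigLev w eta h δ →
        DomLevel w eta h s (((γ - s * δ : ℝ)) : EReal)) ∧
      (∀ χ : ℕ,
        (levVal w eta h χ + ((χ * δ : ℝ) : EReal) = sigLev w eta h δ ∧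
          ∀ s : ℕ, levVal w eta h s + ((s * δ : ℝ) : EReal) = sigLev w eta h δ → s ≤ χ) →
        DomLevel w eta h χ (((γ - χ * δ : ℝ)) : EReal))) := by
  have hsub : ∀ s : ℕ, (((γ - s * δ : ℝ)) : EReal) = (γ : EReal) - (((s : ℝ) * δ : ℝ) : EReal) :=
    fun s => EReal.coe_sub γ ((s : ℝ) * δ)
  -- Forward direction
  have fwd : Prepared w eta h δ γ →
      (((γ : ℝ) : EReal) < sigLev w eta h δ ∨
        (sigLev w eta h δ = sigGam w eta h δ γ ∧
          ∀ s : ℕ, levVal w eta h s + ((s * δ : ℝ) : EReal) = sigLev w eta h δ →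
            DomLevel w eta h s (((γ - s * δ : ℝ)) : EReal))) := by
    intro hp
    by_cases hγ : ((γ : ℝ) : EReal) < sigLev w eta h δ
    · exact Or.inl hγ
    push_neg at hγ
    have hmin : min ((γ : ℝ) : EReal) (sigLev w eta h δ) = sigLev w eta h δ := min_eq_right hγ
    have hP : ∀ s : ℕ, levVal w eta h s + ((s * δ : ℝ) : EReal) = sigLev w eta h δ →
        DomLevel w eta h s (((γ - s * δ : ℝ)) : EReal) := by
      intro s hs
      have hps := hp s
      rw [FinLevel, hmin] at hps
      rcases hps with hd | hr
      · refine domLevel_mono ?_ hd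
        rw [hsub s]
        exact (erle _).2 (hs.le.trans hγ)
      · exfalso
        have h1 := (erlt _).1 hr
        rw [hs] at h1
        exact lt_irrefl _ h1
    refine Or.inr ⟨?_, hP⟩
    have hfin : sigLev w eta h δ < ⊤ := lt_of_le_of_lt hγ (EReal.coe_lt_top γ)
    obtain ⟨s₀, hs₀⟩ := sig_attained w hw eta h hδ hfin
    refine le_antisymm ?_ ?_
    · simp only [sigGam]
      refine le_iInf fun s => ?_
      split_ifs with hd
      · exact sigLev_le w eta h δ s
      · exact le_top
    · have h1 : sigGam w eta h δ γ ≤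
          (if DomLevel w eta h s₀ (((γ - s₀ * δ : ℝ)) : EReal)
            then levVal w eta h s₀ + ((s₀ * δ : ℝ) : EReal) else ⊤) := by
        simp only [sigGam]
        exact iInf_le _ s₀
      rw [if_pos (hP s₀ hs₀), hs₀] at h1
      exact h1
  -- Backward direction
  have bwd : (((γ : ℝ) : EReal) < sigLev w eta h δ ∨
      (sigLev w eta h δ = sigGam w eta h δ γ ∧
        ∀ s : ℕ, levVal w eta h s + ((s * δ : ℝ) : EReal) = sigLev w eta h δ →
          DomLevel w eta h s (((γ - s * δ : ℝ)) : EReal))) → Prepared w eta h δ γ := by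
    intro hrhs s
    rw [FinLevel]
    by_cases hγ : ((γ : ℝ) : EReal) < sigLev w eta h δ
    · refine Or.inr ?_
      rw [min_eq_left hγ.le]
      exact (erlt _).2 (lt_of_lt_of_le hγ (sigLev_le w eta h δ s))
    · push_neg at hγ
      rcases hrhs with h1 | ⟨-, hP⟩
      · exact absurd h1 (not_lt.2 hγ)
      rw [min_eq_right hγ]
      by_cases hs : levVal w eta h s + ((s * δ : ℝ) : EReal) = sigLev w eta h δ
      · refine Or.inl (domLevel_mono ?_ (hP s hs))
        exact (erle _).2 hs.le
      · exact Or.inr ((erlt _).2 (lt_of_le_of_ne (sigLev_le w eta h δ s) (Ne.symm hs)))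
  refine ⟨⟨fwd, bwd⟩, ?_⟩
  intro hp hnγ
  rcases fwd hp with h1 | ⟨-, hP⟩
  · exact absurd h1 hnγ
  exact ⟨hP, fun χ hχ => hP χ hχ.1⟩
end
end
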